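/- arXiv:2312.13983 — 6 statements merged into one kernel-verified Lean document; each statement's English description precedes it below -/
import Mathlib

section
/- Let C ⊆ V and D ⊆ W be convex cones in finite-dimensional real vector spaces, let a₁ be an interior point of C and a₂ an interior point of D. Then a₁ ⊗ a₂ is an interior point of the minimal tensor product C ⊗min D inside V ⊗ W. -/
open scoped TensorProduct

noncomputable section

/-- A convex cone: a set closed under addition and multiplication by nonnegative reals. -/
def IsConvexCone {V : Type*} [AddCommGroup V] [Module ℝ V] (C : Set V) : Prop :=
  (∀ x ∈ C, ∀ y ∈ C, x + y ∈ C) ∧ ∀ r : ℝ, 0 ≤ r → ∀ x ∈ C, r • x ∈ C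

/-- The minimal tensor product `C ⊗min D = { Σᵢ cᵢ ⊗ dᵢ | cᵢ ∈ C, dᵢ ∈ D }`. -/
def minTensor {V W : Type*} [AddCommGroup V] [Module ℝ V] [AddCommGroup W] [Module ℝ W]
    (C : Set V) (D : Set W) : Set (TensorProduct ℝ V W) :=
  (AddSubmonoid.closure {x | ∃ c ∈ C, ∃ d ∈ D, x = c ⊗ₜ[ℝ] d} : AddSubmonoid _)

/-- `minTensor` is closed under nonnegative scalar multiplication. -/
lemma aux_minTensor_smul_mem {V W : Type*} [AddCommGroup V] [Module ℝ V]
    [AddCommGroup W] [Module ℝ W]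
    {C : Set V} {D : Set W} (hC : IsConvexCone C) (r : ℝ) (hr : 0 ≤ r)
    {x : TensorProduct ℝ V W} (hx : x ∈ minTensor C D) : r • x ∈ minTensor C D := by
  induction hx using AddSubmonoid.closure_induction with
  | mem y hy =>
      obtain ⟨c, hc, d, hd, rfl⟩ := hy
      refine AddSubmonoid.subset_closure ⟨r • c, hC.2 r hr c hc, d, hd, ?_⟩
      rw [TensorProduct.smul_tmul']
  | zero => rw [smul_zero]; exact (AddSubmonoid.closure {x | ∃ c ∈ C, ∃ d ∈ D, x = c ⊗ₜ[ℝ] d}).zero_mem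
  | add y z hy hz hy' hz' => rw [smul_add]; exact AddSubmonoid.add_mem _ hy' hz'

/-- From an interior point of a set in a TVS one can move a little in any direction. -/
lemma aux_interior_dir {V : Type*} [AddCommGroup V] [Module ℝ V]
    [TopologicalSpace V] [IsTopologicalAddGroup V] [ContinuousSMul ℝ V]
    {C : Set V} {a : V} (h : a ∈ interior C) (v : V) :
    ∃ ε : ℝ, 0 < ε ∧ a + ε • v ∈ C ∧ a - ε • v ∈ C := by
  have hcont : Continuous fun t : ℝ => a + t • v :=
    continuous_const.add (continuous_id.smul continuous_const)
  have hev : ∀ᶠ t in nhds (0:ℝ), a + t • v ∈ interior C := by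
    have hc := hcont.continuousAt (x := (0:ℝ))
    have hmem : a + (0:ℝ) • v ∈ interior C := by simpa using h
    exact hc.eventually_mem (isOpen_interior.mem_nhds hmem)
  obtain ⟨ε, hε, hball⟩ := Metric.eventually_nhds_iff_ball.mp hev
  refine ⟨ε / 2, by linarith, ?_, ?_⟩
  · refine interior_subset (hball _ ?_)
    simp only [Metric.mem_ball, Real.dist_eq, sub_zero]
    rw [abs_of_pos (by linarith)]; linarith
  · have := hball (-(ε/2)) (by
      simp only [Metric.mem_ball, Real.dist_eq, sub_zero]
      rw [abs_of_neg (by linarith)]; linarith)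
    simpa [neg_smul, sub_eq_add_neg] using interior_subset this

/-- Key tensor identity. -/
lemma aux_tensor_identity {V W : Type*} [AddCommGroup V] [Module ℝ V]
    [AddCommGroup W] [Module ℝ W] (a₁ v' : V) (a₂ w' : W) :
    a₁ ⊗ₜ[ℝ] a₂ - v' ⊗ₜ[ℝ] w'
      = (1/2 : ℝ) • ((a₁ + v') ⊗ₜ[ℝ] (a₂ - w') + (a₁ - v') ⊗ₜ[ℝ] (a₂ + w')) := by
  simp only [TensorProduct.add_tmul, TensorProduct.sub_tmul, TensorProduct.tmul_add,
    TensorProduct.tmul_sub]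
  module

lemma aux_smul_tmul {V W : Type*} [AddCommGroup V] [Module ℝ V]
    [AddCommGroup W] [Module ℝ W] (v : V) (w : W) (ε δ : ℝ) :
    (ε*δ) • (v ⊗ₜ[ℝ] w) = (ε • v) ⊗ₜ[ℝ] (δ • w) := by
  rw [TensorProduct.tmul_smul, TensorProduct.smul_tmul', TensorProduct.smul_tmul',
    smul_smul, mul_comm]

lemma aux_shrink_identity {T : Type*} [AddCommGroup T] [Module ℝ T]
    (p x : T) (s t : ℝ) (ht : t ≠ 0) :
    p - s • x = (s/t) • (p - t • x) + (1 - s/t) • p := by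
  have h : s/t * t = s := div_mul_cancel₀ s ht
  conv_lhs => rw [← h]
  generalize s/t = r
  module

/-- if `a₁` is interior to the convex cone `C ⊆ V` and `a₂` is interior to the
convex cone `D ⊆ W`, then `a₁ ⊗ a₂` is interior to `C ⊗min D` in `V ⊗ W`.  (Each of the
finite-dimensional spaces carries its unique Hausdorff vector topology, encoded by the
instance assumptions.) -/
theorem tmul_mem_interior_minTensor {V W : Type*}
    [AddCommGroup V] [Module ℝ V] [FiniteDimensional ℝ V]
    [TopologicalSpace V] [IsTopologicalAddGroup V] [ContinuousSMul ℝ V] [T2Space V]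
    [AddCommGroup W] [Module ℝ W] [FiniteDimensional ℝ W]
    [TopologicalSpace W] [IsTopologicalAddGroup W] [ContinuousSMul ℝ W] [T2Space W]
    [TopologicalSpace (TensorProduct ℝ V W)] [IsTopologicalAddGroup (TensorProduct ℝ V W)]
    [ContinuousSMul ℝ (TensorProduct ℝ V W)] [T2Space (TensorProduct ℝ V W)]
    (C : Set V) (D : Set W) (hC : IsConvexCone C) (hD : IsConvexCone D)
    {a₁ : V} {a₂ : W} (h₁ : a₁ ∈ interior C) (h₂ : a₂ ∈ interior D) :
    a₁ ⊗ₜ[ℝ] a₂ ∈ interior (minTensor C D) := by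
  set S : Set (TensorProduct ℝ V W) := minTensor C D with hS
  -- basic cone facts about S
  have hSadd : ∀ x ∈ S, ∀ y ∈ S, x + y ∈ S := fun x hx y hy => AddSubmonoid.add_mem _ hx hy
  have hSsmul : ∀ r : ℝ, 0 ≤ r → ∀ x ∈ S, r • x ∈ S :=
    fun r hr x hx => aux_minTensor_smul_mem hC r hr hx
  have hmemS : ∀ c ∈ C, ∀ d ∈ D, c ⊗ₜ[ℝ] d ∈ S :=
    fun c hc d hd => AddSubmonoid.subset_closure ⟨c, hc, d, hd, rfl⟩
  have hab : a₁ ⊗ₜ[ℝ] a₂ ∈ S := hmemS _ (interior_subset h₁) _ (interior_subset h₂)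
  -- shrinking lemma
  have shrink : ∀ x : TensorProduct ℝ V W, ∀ s t : ℝ, 0 ≤ s → s ≤ t → 0 < t →
      a₁ ⊗ₜ[ℝ] a₂ - t • x ∈ S → a₁ ⊗ₜ[ℝ] a₂ - s • x ∈ S := by
    intro x s t hs hst ht hx
    rw [aux_shrink_identity _ x s t ht.ne']
    refine hSadd _ (hSsmul _ (div_nonneg hs ht.le) _ hx) _
      (hSsmul _ (by rw [sub_nonneg]; exact (div_le_one ht).mpr hst) _ hab)
  -- main point: we can subtract a small multiple of anything
  have hmain : ∀ z : TensorProduct ℝ V W, ∃ t : ℝ, 0 < t ∧ a₁ ⊗ₜ[ℝ] a₂ - t • z ∈ S := by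
    intro z
    induction z using TensorProduct.induction_on with
    | zero => exact ⟨1, one_pos, by simpa using hab⟩
    | tmul v w =>
        obtain ⟨ε, hε, hv₁, hv₂⟩ := aux_interior_dir h₁ v
        obtain ⟨δ, hδ, hw₁, hw₂⟩ := aux_interior_dir h₂ w
        refine ⟨ε * δ, mul_pos hε hδ, ?_⟩
        rw [aux_smul_tmul, aux_tensor_identity]
        exact hSsmul _ (by norm_num) _
          (hSadd _ (hmemS _ hv₁ _ hw₂) _ (hmemS _ hv₂ _ hw₁))
    | add x y hx hy =>
        obtain ⟨tx, htx, hxS⟩ := hx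
        obtain ⟨ty, hty, hyS⟩ := hy
        refine ⟨min tx ty / 2, by positivity, ?_⟩
        have key : a₁ ⊗ₜ[ℝ] a₂ - (min tx ty / 2) • (x + y)
            = (1/2 : ℝ) • (a₁ ⊗ₜ[ℝ] a₂ - (min tx ty) • x)
              + (1/2 : ℝ) • (a₁ ⊗ₜ[ℝ] a₂ - (min tx ty) • y) := by module
        rw [key]
        have hmin : 0 < min tx ty := lt_min htx hty
        refine hSadd _ (hSsmul _ (by norm_num) _
            (shrink x _ tx hmin.le (min_le_left _ _) htx hxS)) _
          (hSsmul _ (by norm_num) _ (shrink y _ ty hmin.le (min_le_right _ _) hty hyS))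
  -- S is convex
  have hconv : Convex ℝ S := by
    intro x hx y hy a b ha hb _
    exact hSadd _ (hSsmul a ha x hx) _ (hSsmul b hb y hy)
  have h0S : (0 : TensorProduct ℝ V W) ∈ S := AddSubmonoid.zero_mem _
  -- S spans everything
  have hspan : Submodule.span ℝ S = ⊤ := by
    rw [Submodule.eq_top_iff']
    intro z
    obtain ⟨t, ht, hz⟩ := hmain z
    have h1 : a₁ ⊗ₜ[ℝ] a₂ ∈ Submodule.span ℝ S := Submodule.subset_span hab
    have h2 : a₁ ⊗ₜ[ℝ] a₂ - t • z ∈ Submodule.span ℝ S := Submodule.subset_span hz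
    have h3 : t • z ∈ Submodule.span ℝ S := by
      have := Submodule.sub_mem _ h1 h2
      simpa using this
    have h4 := Submodule.smul_mem _ t⁻¹ h3
    rwa [smul_smul, inv_mul_cancel₀ ht.ne', one_smul] at h4
  -- transfer to a normed model to get a nonempty interior
  let b := Module.Basis.ofVectorSpace ℝ (TensorProduct ℝ V W)
  let e : TensorProduct ℝ V W ≃L[ℝ] (Module.Basis.ofVectorSpaceIndex ℝ (TensorProduct ℝ V W) → ℝ) :=
    b.equivFun.toContinuousLinearEquiv
  have h0S' : (0 : _) ∈ (⇑e '' S) := ⟨0, h0S, map_zero e⟩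
  have hconv' : Convex ℝ (⇑e '' S) := hconv.linear_image (e : TensorProduct ℝ V W →ₗ[ℝ] (Module.Basis.ofVectorSpaceIndex ℝ (TensorProduct ℝ V W) → ℝ))
  have hspan' : Submodule.span ℝ (⇑e '' S) = ⊤ := by
    change Submodule.span ℝ (⇑(e : TensorProduct ℝ V W →ₗ[ℝ] (Module.Basis.ofVectorSpaceIndex ℝ (TensorProduct ℝ V W) → ℝ)) '' S) = ⊤
    rw [Submodule.span_image, hspan, Submodule.map_top]
    exact LinearMap.range_eq_top.mpr e.surjective
  have haff : affineSpan ℝ (⇑e '' S) = ⊤ := by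
    rw [AffineSubspace.affineSpan_eq_top_iff_vectorSpan_eq_top_of_nonempty ℝ _ _ ⟨0, h0S'⟩,
      vectorSpan_eq_span_vsub_set_right ℝ h0S']
    simpa [vsub_eq_sub, Set.image_id'] using hspan'
  have hne : (interior (⇑e '' S)).Nonempty :=
    (hconv'.interior_nonempty_iff_affineSpan_eq_top).mpr haff
  obtain ⟨y', hy'⟩ := hne
  set y₀ := e.symm y' with hy₀def
  have hy₀ : y₀ ∈ interior S := by
    have h3 := e.symm.toHomeomorph.image_interior (⇑e '' S)
    have h4 : y₀ ∈ ⇑e.symm.toHomeomorph '' interior (⇑e '' S) := ⟨y', hy', rfl⟩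
    rw [h3] at h4
    have h5 : ⇑e.symm.toHomeomorph '' (⇑e '' S) = S := by
      ext x
      simp [Set.image_image]
    rwa [h5] at h4
  -- now use the interior point y₀ of S
  obtain ⟨t, ht, hsub⟩ := hmain y₀
  have h1 : t • y₀ ∈ interior S := by
    have himg : (fun x => t • x) '' interior S ⊆ S := by
      rintro _ ⟨x, hx, rfl⟩
      exact hSsmul t ht.le _ (interior_subset hx)
    exact interior_maximal himg ((isOpenMap_smul₀ ht.ne') _ isOpen_interior)
      ⟨y₀, hy₀, rfl⟩
  have himg2 : (fun z => (a₁ ⊗ₜ[ℝ] a₂ - t • y₀) + z) '' interior S ⊆ S := by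
    rintro _ ⟨z, hz, rfl⟩
    exact hSadd _ hsub _ (interior_subset hz)
  have h2 := interior_maximal himg2 ((isOpenMap_add_left _) _ isOpen_interior)
  exact h2 ⟨t • y₀, h1, by module⟩
end
end

section
/- (Vector-valued Riesz–Krein extension theorem) Let C ⊆ V and D ⊆ W be closed convex cones in finite-dimensional real vector spaces with D sharp, and let U ⊆ V be a linear subspace that intersects the interior of C. Let Ψ: U → W be a linear map with Ψ(C ∩ U) ⊆ D. Then Ψ admits an extension to a linear map Φ: V → W with Φ|_U = Ψ and Φ(C) ⊆ D if and only if (Ψ ⊗ id_{W'}) maps (C ⊗min D^∨) ∩ (U ⊗ W') into D ⊗min D^∨. In particular, when W = ℝ and D = ℝ_{≥0}, every linear functional on U that is nonnegative on C ∩ U extends to a linear functional on V that is nonnegative on C. -/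
open scoped TensorProduct

noncomputable section

/-- The dual cone `C^∨ ⊆ V'` of a set `C ⊆ V`. -/
def dualCone {V : Type*} [AddCommGroup V] [Module ℝ V] (C : Set V) :
    Set (Module.Dual ℝ V) := {φ | ∀ c ∈ C, 0 ≤ φ c}

section MinTensorAux

variable {V W V' W' : Type*} [AddCommGroup V] [Module ℝ V] [AddCommGroup W] [Module ℝ W]
  [AddCommGroup V'] [Module ℝ V'] [AddCommGroup W'] [Module ℝ W']

lemma minTensor_zero (C : Set V) (D : Set W) : (0 : TensorProduct ℝ V W) ∈ minTensor C D :=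
  AddSubmonoid.zero_mem _

lemma minTensor_add {C : Set V} {D : Set W} {x y : TensorProduct ℝ V W}
    (hx : x ∈ minTensor C D) (hy : y ∈ minTensor C D) : x + y ∈ minTensor C D :=
  AddSubmonoid.add_mem _ hx hy

lemma tmul_mem_minTensor {C : Set V} {D : Set W} {c : V} {d : W} (hc : c ∈ C) (hd : d ∈ D) :
    c ⊗ₜ[ℝ] d ∈ minTensor C D := AddSubmonoid.subset_closure ⟨c, hc, d, hd, rfl⟩

lemma minTensor_induction {C : Set V} {D : Set W} {p : TensorProduct ℝ V W → Prop}
    (hgen : ∀ c ∈ C, ∀ d ∈ D, p (c ⊗ₜ[ℝ] d)) (h0 : p 0)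
    (hadd : ∀ x y, p x → p y → p (x + y)) {z : TensorProduct ℝ V W}
    (hz : z ∈ minTensor C D) : p z := by
  refine AddSubmonoid.closure_induction ?_ h0 (fun x y _ _ hx hy => hadd x y hx hy) hz
  rintro x ⟨c, hc, d, hd, rfl⟩
  exact hgen c hc d hd

lemma minTensor_map {C : Set V} {D : Set W} {C' : Set V'} {D' : Set W'}
    (f : V →ₗ[ℝ] V') (g : W →ₗ[ℝ] W')
    (hf : ∀ c ∈ C, f c ∈ C') (hg : ∀ d ∈ D, g d ∈ D') {z : TensorProduct ℝ V W}
    (hz : z ∈ minTensor C D) : TensorProduct.map f g z ∈ minTensor C' D' := by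
  refine minTensor_induction (p := fun z => TensorProduct.map f g z ∈ minTensor C' D')
    ?_ ?_ ?_ hz
  · intro c hc d hd
    rw [TensorProduct.map_tmul]
    exact tmul_mem_minTensor (hf c hc) (hg d hd)
  · show TensorProduct.map f g 0 ∈ _
    rw [map_zero]; exact minTensor_zero _ _
  · intro x y hx hy
    show TensorProduct.map f g (x + y) ∈ _
    rw [map_add]; exact minTensor_add hx hy

lemma minTensor_smul {C : Set V} {D : Set W} (hC : ∀ r : ℝ, 0 ≤ r → ∀ x ∈ C, r • x ∈ C)
    {r : ℝ} (hr : 0 ≤ r) {z : TensorProduct ℝ V W} (hz : z ∈ minTensor C D) :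
    r • z ∈ minTensor C D := by
  refine minTensor_induction (p := fun z => r • z ∈ minTensor C D) ?_ ?_ ?_ hz
  · intro c hc d hd
    rw [TensorProduct.smul_tmul']
    exact tmul_mem_minTensor (hC r hr c hc) hd
  · show r • (0 : TensorProduct ℝ V W) ∈ _
    rw [smul_zero]; exact minTensor_zero _ _
  · intro x y hx hy
    show r • (x + y) ∈ _
    rw [smul_add]; exact minTensor_add hx hy

lemma minTensor_pair_nonneg {D : Set W} {z : TensorProduct ℝ W (Module.Dual ℝ W)}
    (hz : z ∈ minTensor D (dualCone D)) :
    0 ≤ TensorProduct.lift (Module.Dual.eval ℝ W) z := by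
  refine minTensor_induction (p := fun z => 0 ≤ TensorProduct.lift (Module.Dual.eval ℝ W) z)
    ?_ ?_ ?_ hz
  · intro d hd φ hφ
    rw [TensorProduct.lift.tmul]
    exact hφ d hd
  · show (0:ℝ) ≤ TensorProduct.lift (Module.Dual.eval ℝ W) 0
    rw [map_zero]
  · intro x y hx hy
    show (0:ℝ) ≤ TensorProduct.lift (Module.Dual.eval ℝ W) (x + y)
    rw [map_add]; positivity

lemma dualCone_add {D : Set W} {φ ψ : Module.Dual ℝ W} (h1 : φ ∈ dualCone D)
    (h2 : ψ ∈ dualCone D) : φ + ψ ∈ dualCone D := fun d hd => by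
  have := add_nonneg (h1 d hd) (h2 d hd); simpa using this

lemma dualCone_smul {D : Set W} {r : ℝ} (hr : 0 ≤ r) {φ : Module.Dual ℝ W}
    (h : φ ∈ dualCone D) : r • φ ∈ dualCone D := fun d hd => by
  have := mul_nonneg hr (h d hd); simpa using this

end MinTensorAux

section Interior

variable {V : Type*} [AddCommGroup V] [Module ℝ V] [TopologicalSpace V]
  [IsTopologicalAddGroup V] [ContinuousSMul ℝ V]

lemma exists_pos_smul_mem {C : Set V} {u : V} (hu : u ∈ interior C) (v : V) :
    ∃ t : ℝ, 0 < t ∧ u + t • v ∈ C ∧ u - t • v ∈ C := by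
  have hC : C ∈ nhds u := mem_interior_iff_mem_nhds.1 hu
  have h1 : Continuous fun t : ℝ => u + t • v :=
    continuous_const.add (continuous_id.smul continuous_const)
  have h2 : Continuous fun t : ℝ => u - t • v :=
    continuous_const.sub (continuous_id.smul continuous_const)
  have e1 : ∀ᶠ t : ℝ in nhds 0, u + t • v ∈ C := by
    have := h1.continuousAt (x := 0)
    refine this.eventually_mem ?_
    simpa using hC
  have e2 : ∀ᶠ t : ℝ in nhds 0, u - t • v ∈ C := by
    have := h2.continuousAt (x := 0)
    refine this.eventually_mem ?_
    simpa using hC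
  have e3 : ∀ᶠ t : ℝ in nhdsWithin 0 (Set.Ioi 0), (u + t • v ∈ C ∧ u - t • v ∈ C) ∧ 0 < t :=
    (((e1.and e2).filter_mono nhdsWithin_le_nhds).and eventually_mem_nhdsWithin)
  obtain ⟨t, ⟨ht1, ht2⟩, ht0⟩ := e3.exists
  exact ⟨t, ht0, ht1, ht2⟩

end Interior

section Bipolar

variable {W : Type*} [AddCommGroup W] [Module ℝ W] [FiniteDimensional ℝ W]
  [TopologicalSpace W] [IsTopologicalAddGroup W] [ContinuousSMul ℝ W] [T2Space W]

lemma mem_of_forall_dualCone_nonneg {D : Set W} (hDc : IsConvexCone D) (hDcl : IsClosed D)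
    (hne : D.Nonempty) {w : W} (hw : ∀ φ ∈ dualCone D, 0 ≤ φ w) : w ∈ D := by
  classical
  by_contra hwD
  set n := Module.finrank ℝ W
  let e : W ≃ₗ[ℝ] EuclideanSpace ℝ (Fin n) :=
    (Module.finBasis ℝ W).equivFun.trans
      (EuclideanSpace.equiv (Fin n) ℝ).toLinearEquiv.symm
  let ec : W ≃L[ℝ] EuclideanSpace ℝ (Fin n) := e.toContinuousLinearEquiv
  have hecoe : ∀ x : W, ec x = e x := fun _ => rfl
  have hecoe' : ∀ y, ec.symm y = e.symm y := fun _ => rfl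
  have hKcl : IsClosed (e '' D : Set (EuclideanSpace ℝ (Fin n))) := by
    have himg : (e '' D : Set (EuclideanSpace ℝ (Fin n))) = ec.symm ⁻¹' D := by
      ext x
      constructor
      · rintro ⟨d, hd, rfl⟩
        show ec.symm (e d) ∈ D
        rw [hecoe', LinearEquiv.symm_apply_apply]
        exact hd
      · intro hx
        refine ⟨e.symm x, ?_, e.apply_symm_apply x⟩
        rw [← hecoe' x]; exact hx
    rw [himg]
    exact hDcl.preimage ec.symm.continuous
  let K : ProperCone ℝ (EuclideanSpace ℝ (Fin n)) :=
    { carrier := e '' D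
      smul_mem' := by
        rintro c x ⟨d, hd, rfl⟩
        exact ⟨(c : ℝ) • d, hDc.2 c c.2 d hd, map_smul e (c : ℝ) d⟩
      zero_mem' := by
        obtain ⟨d, hd⟩ := hne
        exact ⟨(0 : ℝ) • d, hDc.2 0 le_rfl d hd, by simp⟩
      add_mem' := by
        rintro x y ⟨d, hd, rfl⟩ ⟨d', hd', rfl⟩
        exact ⟨d + d', hDc.1 d hd d' hd', map_add e d d'⟩
      isClosed' := hKcl }
  have hbK : e w ∉ K := by
    rintro ⟨d, hd, hde⟩
    exact hwD (by rwa [← e.injective hde])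
  obtain ⟨y, hy1, hy2⟩ :=
    K.hyperplane_separation' hbK
  let φ : Module.Dual ℝ W :=
    { toFun := fun v => (inner ℝ (e v) y : ℝ)
      map_add' := fun a b => by simp [inner_add_left]
      map_smul' := fun r a => by
        simp only [map_smul, RingHom.id_apply, smul_eq_mul]
        exact real_inner_smul_left _ _ _ }
  have hφD : φ ∈ dualCone D := by
    intro d hd
    exact hy1 (e d) ⟨d, hd, rfl⟩
  have := hw φ hφD
  have : (0:ℝ) ≤ inner ℝ (e w) y := this
  exact absurd this (not_le.2 hy2)

lemma exists_sub_dualCone {D : Set W} (hDc : IsConvexCone D) (hDcl : IsClosed D)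
    (hDsharp : ∀ x ∈ D, -x ∈ D → x = 0) (hne : D.Nonempty) (ω : Module.Dual ℝ W) :
    ∃ a ∈ dualCone D, ∃ b ∈ dualCone D, ω = a - b := by
  have h0 : (0 : Module.Dual ℝ W) ∈ dualCone D := fun d _ => le_refl 0
  let N : Submodule ℝ (Module.Dual ℝ W) :=
    { carrier := {x | ∃ a ∈ dualCone D, ∃ b ∈ dualCone D, x = a - b}
      add_mem' := by
        rintro x y ⟨a, ha, b, hb, rfl⟩ ⟨a', ha', b', hb', rfl⟩
        exact ⟨a + a', dualCone_add ha ha', b + b', dualCone_add hb hb', by abel⟩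
      zero_mem' := ⟨0, h0, 0, h0, by abel⟩
      smul_mem' := by
        rintro r x ⟨a, ha, b, hb, rfl⟩
        rcases le_or_gt 0 r with hr | hr
        · exact ⟨r • a, dualCone_smul hr ha, r • b, dualCone_smul hr hb, by
            rw [smul_sub]⟩
        · refine ⟨(-r) • b, dualCone_smul (by linarith) hb, (-r) • a,
            dualCone_smul (by linarith) ha, ?_⟩
          rw [smul_sub]; module }
  have hN : N = ⊤ := by
    by_contra hne'
    obtain ⟨g, hg0, hg⟩ := Submodule.exists_dual_map_eq_bot_of_lt_top
      (lt_top_iff_ne_top.2 hne') inferInstance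
    set w := (Module.evalEquiv ℝ W).symm g with hwdef
    have hφw : ∀ φ ∈ dualCone D, φ w = 0 := by
      intro φ hφ
      have hφN : φ ∈ N := ⟨φ, hφ, 0, h0, by abel⟩
      have : g φ = 0 := by
        have : g φ ∈ N.map g := Submodule.mem_map_of_mem hφN
        rwa [hg, Submodule.mem_bot] at this
      rw [hwdef, Module.apply_evalEquiv_symm_apply]
      exact this
    have hwD : w ∈ D :=
      mem_of_forall_dualCone_nonneg hDc hDcl hne (fun φ hφ => (hφw φ hφ).ge)
    have hwD' : -w ∈ D :=
      mem_of_forall_dualCone_nonneg hDc hDcl hne (fun φ hφ => by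
        rw [map_neg, hφw φ hφ, neg_zero])
    have : w = 0 := hDsharp w hwD hwD'
    apply hg0
    calc g = Module.evalEquiv ℝ W w := ((Module.evalEquiv ℝ W).apply_symm_apply g).symm
      _ = 0 := by rw [this]; exact (Module.evalEquiv ℝ W).map_zero
  have : ω ∈ N := hN ▸ Submodule.mem_top
  exact this

end Bipolar

/-- vector-valued Riesz–Krein extension theorem: for closed convex cones
`C ⊆ V`, `D ⊆ W` with `D` sharp, a subspace `U ⊆ V` meeting the interior of `C`, and a
linear map `Ψ : U → W` with `Ψ(C ∩ U) ⊆ D`, the map `Ψ` extends to a positive linear map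
`Φ : V → W` iff `Ψ ⊗ id_{W'}` maps `(C ⊗min D^∨) ∩ (U ⊗ W')` into `D ⊗min D^∨`.
In particular (second conjunct), every linear functional on `U` nonnegative on `C ∩ U`
extends to a linear functional on `V` nonnegative on `C`. -/
theorem riesz_krein_vector_valued {V W : Type*}
    [AddCommGroup V] [Module ℝ V] [FiniteDimensional ℝ V]
    [TopologicalSpace V] [IsTopologicalAddGroup V] [ContinuousSMul ℝ V] [T2Space V]
    [AddCommGroup W] [Module ℝ W] [FiniteDimensional ℝ W]
    [TopologicalSpace W] [IsTopologicalAddGroup W] [ContinuousSMul ℝ W] [T2Space W]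
    (C : Set V) (D : Set W) (hCc : IsConvexCone C) (hDc : IsConvexCone D)
    (hCcl : IsClosed C) (hDcl : IsClosed D)
    (hDsharp : ∀ x ∈ D, -x ∈ D → x = 0)
    (U : Submodule ℝ V) (hU : ∃ u ∈ (U : Set V), u ∈ interior C)
    (Ψ : U →ₗ[ℝ] W) (hΨ : ∀ u : U, (u : V) ∈ C → Ψ u ∈ D) :
    ((∃ Φ : V →ₗ[ℝ] W, (∀ u : U, Φ u = Ψ u) ∧ ∀ c ∈ C, Φ c ∈ D) ↔
      ∀ y : TensorProduct ℝ U (Module.Dual ℝ W),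
        TensorProduct.map U.subtype LinearMap.id y ∈ minTensor C (dualCone D) →
        TensorProduct.map Ψ LinearMap.id y ∈ minTensor D (dualCone D)) ∧
    (∀ f : U →ₗ[ℝ] ℝ, (∀ u : U, (u : V) ∈ C → 0 ≤ f u) →
      ∃ g : V →ₗ[ℝ] ℝ, (∀ u : U, g u = f u) ∧ ∀ c ∈ C, 0 ≤ g c) := by
  classical
  obtain ⟨u, huU, huC⟩ := hU
  have hDne : D.Nonempty := ⟨Ψ ⟨u, huU⟩, hΨ ⟨u, huU⟩ (interior_subset huC)⟩
  have scalar : ∀ f : U →ₗ[ℝ] ℝ, (∀ u : U, (u : V) ∈ C → 0 ≤ f u) →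
      ∃ g : V →ₗ[ℝ] ℝ, (∀ u : U, g u = f u) ∧ ∀ c ∈ C, 0 ≤ g c := by
    intro f hf
    let s' : PointedCone ℝ V :=
      { carrier := C
        smul_mem' := fun c {x} hx => hCc.2 c c.2 x hx
        zero_mem' := by simpa using hCc.2 0 le_rfl u (interior_subset huC)
        add_mem' := fun {x y} hx hy => hCc.1 x hx y hy }
    have dense : ∀ y, ∃ x : (⟨U, f⟩ : V →ₗ.[ℝ] ℝ).domain, (x : V) + y ∈ s' := by
      intro y
      obtain ⟨t, ht, h1, -⟩ := exists_pos_smul_mem huC y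
      refine ⟨t⁻¹ • (⟨u, huU⟩ : U), ?_⟩
      show t⁻¹ • u + y ∈ C
      have hy : t⁻¹ • u + y = t⁻¹ • (u + t • y) := by
        rw [smul_add, smul_smul, inv_mul_cancel₀ ht.ne', one_smul]
      rw [hy]
      exact hCc.2 _ (inv_nonneg.2 ht.le) _ h1
    obtain ⟨g, hg1, hg2⟩ := riesz_extension s' ⟨U, f⟩ (fun x hx => hf x hx) dense
    exact ⟨g, fun v => hg1 v, hg2⟩
  refine ⟨⟨?_, ?_⟩, scalar⟩
  · rintro ⟨Φ, hΦu, hΦC⟩ y hy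
    have h1 : Φ.comp U.subtype = Ψ := LinearMap.ext fun x => hΦu x
    have key : TensorProduct.map Ψ LinearMap.id y
        = TensorProduct.map Φ LinearMap.id (TensorProduct.map U.subtype LinearMap.id y) := by
      rw [← LinearMap.comp_apply, ← TensorProduct.map_comp, h1, LinearMap.id_comp]
    rw [key]
    exact minTensor_map _ _ hΦC (fun d hd => hd) hy
  · intro hyp
    set ι : TensorProduct ℝ U (Module.Dual ℝ W) →ₗ[ℝ] TensorProduct ℝ V (Module.Dual ℝ W) :=
      TensorProduct.map U.subtype LinearMap.id with hι_def
    have hinj : Function.Injective ι :=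
      Module.Flat.rTensor_preserves_injective_linearMap (M := Module.Dual ℝ W)
        U.subtype U.injective_subtype
    set pair : TensorProduct ℝ W (Module.Dual ℝ W) →ₗ[ℝ] ℝ :=
      TensorProduct.lift (Module.Dual.eval ℝ W) with hpair_def
    let s : PointedCone ℝ (TensorProduct ℝ V (Module.Dual ℝ W)) :=
      { carrier := minTensor C (dualCone D)
        smul_mem' := fun c {x} hx => minTensor_smul hCc.2 c.2 hx
        zero_mem' := minTensor_zero C (dualCone D)
        add_mem' := fun {x y} hx hy => minTensor_add hx hy }
    let eI := LinearEquiv.ofInjective ι hinj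
    let pm : TensorProduct ℝ V (Module.Dual ℝ W) →ₗ.[ℝ] ℝ :=
      ⟨LinearMap.range ι, (pair.comp (TensorProduct.map Ψ LinearMap.id)).comp
        eI.symm.toLinearMap⟩
    have pm_apply : ∀ (y : TensorProduct ℝ U (Module.Dual ℝ W))
        (h : ι y ∈ LinearMap.range ι),
        pm ⟨ι y, h⟩ = pair (TensorProduct.map Ψ LinearMap.id y) := by
      intro y h
      show pair (TensorProduct.map Ψ LinearMap.id (eI.symm ⟨ι y, h⟩)) = _
      have h2 : ι (eI.symm ⟨ι y, h⟩) = ι y := LinearEquiv.ofInjective_symm_apply (f := ι) (h := hinj) ⟨ι y, h⟩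
      rw [hinj h2]
    have nonneg : ∀ x : pm.domain, (x : TensorProduct ℝ V (Module.Dual ℝ W)) ∈ s → 0 ≤ pm x := by
      rintro ⟨x, hx⟩ hxs
      obtain ⟨y, rfl⟩ := hx
      rw [pm_apply y (LinearMap.mem_range_self _ _)]
      exact minTensor_pair_nonneg (hyp y hxs)
    have dense : ∀ z, ∃ x : pm.domain, (x : TensorProduct ℝ V (Module.Dual ℝ W)) + z ∈ s := by
      intro z
      induction z using TensorProduct.induction_on with
      | zero => exact ⟨0, by simpa using minTensor_zero C (dualCone D)⟩
      | tmul v ω =>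
        obtain ⟨t, ht, h1, h2⟩ := exists_pos_smul_mem huC v
        obtain ⟨a, ha, b, hb, hω⟩ := exists_sub_dualCone hDc hDcl hDsharp hDne ω
        set ψ := a + b with hψ
        have hψω1 : ψ + ω ∈ dualCone D := by
          have h' : ψ + ω = a + a := by rw [hψ, hω]; abel
          rw [h']; exact dualCone_add ha ha
        have hψω2 : ψ - ω ∈ dualCone D := by
          have h' : ψ - ω = b + b := by rw [hψ, hω]; abel
          rw [h']; exact dualCone_add hb hb
        have hE : ((u + t • v) ⊗ₜ[ℝ] (ψ + ω) + (u - t • v) ⊗ₜ[ℝ] (ψ - ω) :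
            TensorProduct ℝ V (Module.Dual ℝ W)) ∈ minTensor C (dualCone D) :=
          minTensor_add (tmul_mem_minTensor h1 hψω1) (tmul_mem_minTensor h2 hψω2)
        have hEeq : (u + t • v) ⊗ₜ[ℝ] (ψ + ω) + (u - t • v) ⊗ₜ[ℝ] (ψ - ω)
            = (2:ℝ) • (u ⊗ₜ[ℝ] ψ) + (2*t) • (v ⊗ₜ[ℝ] ω) := by
          simp only [TensorProduct.tmul_add, TensorProduct.tmul_sub, TensorProduct.add_tmul,
            TensorProduct.sub_tmul, ← TensorProduct.smul_tmul']
          module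
        have h2t : (2*t : ℝ) ≠ 0 := by positivity
        refine ⟨⟨ι (((2*t)⁻¹ * 2) • ((⟨u, huU⟩ : U) ⊗ₜ[ℝ] ψ)),
          LinearMap.mem_range_self _ _⟩, ?_⟩
        show ι (((2*t)⁻¹ * 2) • ((⟨u, huU⟩ : U) ⊗ₜ[ℝ] ψ)) + v ⊗ₜ[ℝ] ω
          ∈ minTensor C (dualCone D)
        have hι : ι (((2*t)⁻¹ * 2) • ((⟨u, huU⟩ : U) ⊗ₜ[ℝ] ψ))
            = ((2*t)⁻¹ * 2) • (u ⊗ₜ[ℝ] ψ) := by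
          rw [map_smul, hι_def, TensorProduct.map_tmul]
          rfl
        rw [hι]
        have heq : ((2*t)⁻¹ * 2) • (u ⊗ₜ[ℝ] ψ) + v ⊗ₜ[ℝ] ω
            = (2*t)⁻¹ • ((2:ℝ) • (u ⊗ₜ[ℝ] ψ) + (2*t) • (v ⊗ₜ[ℝ] ω)) := by
          rw [smul_add, smul_smul, smul_smul, inv_mul_cancel₀ h2t, one_smul]
        rw [heq, ← hEeq]
        exact minTensor_smul hCc.2 (by positivity) hE
      | add z₁ z₂ ih₁ ih₂ =>
        obtain ⟨x₁, hx₁⟩ := ih₁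
        obtain ⟨x₂, hx₂⟩ := ih₂
        refine ⟨x₁ + x₂, ?_⟩
        have h' : ((x₁ + x₂ : pm.domain) : TensorProduct ℝ V (Module.Dual ℝ W)) + (z₁ + z₂)
            = ((x₁ : TensorProduct ℝ V (Module.Dual ℝ W)) + z₁)
              + ((x₂ : TensorProduct ℝ V (Module.Dual ℝ W)) + z₂) := by
          push_cast; abel
        rw [h']
        exact minTensor_add hx₁ hx₂
    obtain ⟨g, hg1, hg2⟩ := riesz_extension s pm nonneg dense
    let Φ : V →ₗ[ℝ] W :=
      (Module.evalEquiv ℝ W).symm.toLinearMap.comp (TensorProduct.curry g)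
    have hΦeval : ∀ (v : V) (φ : Module.Dual ℝ W), φ (Φ v) = g (v ⊗ₜ[ℝ] φ) := by
      intro v φ
      show φ ((Module.evalEquiv ℝ W).symm (TensorProduct.curry g v)) = _
      rw [Module.apply_evalEquiv_symm_apply]
      exact TensorProduct.curry_apply g v φ
    refine ⟨Φ, ?_, ?_⟩
    · intro x
      have hall : ∀ φ : Module.Dual ℝ W, φ (Φ x - Ψ x) = 0 := by
        intro φ
        rw [map_sub, hΦeval, sub_eq_zero]
        have hmem : ι ((x : U) ⊗ₜ[ℝ] φ) ∈ LinearMap.range ι := LinearMap.mem_range_self _ _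
        have hιx : ι ((x : U) ⊗ₜ[ℝ] φ) = (x : V) ⊗ₜ[ℝ] φ := by
          rw [hι_def, TensorProduct.map_tmul]; rfl
        calc g ((x : V) ⊗ₜ[ℝ] φ) = g (ι ((x : U) ⊗ₜ[ℝ] φ)) := by rw [hιx]
          _ = pm ⟨ι ((x : U) ⊗ₜ[ℝ] φ), hmem⟩ := hg1 ⟨ι ((x : U) ⊗ₜ[ℝ] φ), hmem⟩
          _ = pair (TensorProduct.map Ψ LinearMap.id ((x : U) ⊗ₜ[ℝ] φ)) := pm_apply _ _
          _ = φ (Ψ x) := by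
              rw [TensorProduct.map_tmul, hpair_def, TensorProduct.lift.tmul]; rfl
      have := (Module.forall_dual_apply_eq_zero_iff ℝ (Φ x - Ψ x)).1 hall
      exact sub_eq_zero.1 this
    · intro c hc
      apply mem_of_forall_dualCone_nonneg hDc hDcl hDne
      intro φ hφ
      rw [hΦeval]
      exact hg2 _ (tmul_mem_minTensor hc hφ)
end
end

section
/- (Arveson's extension theorem, finite-dimensional version) Let X ⊆ Mat_d(ℂ) be a complex linear subspace containing the identity matrix I_d and closed under conjugate transpose (a concrete operator system). Let ψ: X → Mat_t(ℂ) be a ℂ-linear map that is completely positive, i.e., for every s ≥ 1 and every s×s block matrix A = (A_{kl}) with entries A_{kl} ∈ X that is positive semidefinite as an element of Mat_{ds}(ℂ), the block matrix (ψ(A_{kl}))_{k,l} ∈ Mat_{ts}(ℂ) is positive semidefinite. Then there exists a completely positive ℂ-linear map φ: Mat_d(ℂ) → Mat_t(ℂ) with φ|_X = ψ. -/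
open Matrix
open scoped ComplexOrder

noncomputable section

/-- An `s × s` block matrix with `d × d` blocks is positive semidefinite (as an element of
`Mat_{ds}(ℂ)`). -/
def BlockPosSemidef {d s : ℕ} (A : Fin s → Fin s → Matrix (Fin d) (Fin d) ℂ) : Prop :=
  (Matrix.of fun (p q : Fin s × Fin d) => A p.1 q.1 p.2 q.2).PosSemidef

namespace ArvesonAux

variable {n : Type*} [Fintype n] [DecidableEq n]

lemma herm_quad_conj {h : Matrix n n ℂ} (hh : h.IsHermitian) (v : n → ℂ) :
    (starRingEnd ℂ) (star v ⬝ᵥ h *ᵥ v) = star v ⬝ᵥ h *ᵥ v := by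
  simp only [dotProduct, mulVec, Pi.star_apply, map_sum, _root_.map_mul, Finset.mul_sum,
    RingHomCompTriple.comp_apply, Complex.conj_conj]
  rw [Finset.sum_comm]
  refine Finset.sum_congr rfl fun i _ => Finset.sum_congr rfl fun j _ => ?_
  have hc : (starRingEnd ℂ) (h j i) = h i j := by
    conv_rhs => rw [← hh]
    simp [conjTranspose_apply]
  simp only [_root_.map_mul, Complex.conj_conj, ← Complex.star_def]
  rw [show (starRingEnd ℂ) (h j i) = star (h j i) from rfl] at hc
  rw [hc]
  ring_nf
  rw [show star (star (v j)) = v j from star_star _]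
  ring

lemma quad_bound {h : Matrix n n ℂ} (v : n → ℂ) :
    ‖star v ⬝ᵥ h *ᵥ v‖ ≤ (∑ i, ∑ j, ‖h i j‖) * ∑ i, ‖v i‖ ^ 2 := by
  simp only [dotProduct, mulVec, Pi.star_apply]
  calc ‖∑ i, star (v i) * ∑ j, h i j * v j‖
      ≤ ∑ i, ∑ j, ‖v i‖ * (‖h i j‖ * ‖v j‖) := by
        refine (norm_sum_le _ _).trans (Finset.sum_le_sum fun i _ => ?_)
        rw [Finset.mul_sum]
        refine (norm_sum_le _ _).trans (Finset.sum_le_sum fun j _ => ?_)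
        simp [_root_.map_mul, mul_assoc]
    _ ≤ ∑ i, ∑ j, ‖h i j‖ * ∑ k, ‖v k‖ ^ 2 := by
        refine Finset.sum_le_sum fun i _ => Finset.sum_le_sum fun j _ => ?_
        have h1 : ‖v i‖ * ‖v j‖ ≤ ∑ k, ‖v k‖ ^ 2 := by
          calc ‖v i‖ * ‖v j‖
              ≤ (‖v i‖ ^2 + ‖v j‖^2) / 2 := by
                nlinarith [sq_nonneg (‖v i‖ - ‖v j‖)]
            _ ≤ ∑ k, ‖v k‖ ^ 2 := by
                have hi : ‖v i‖ ^ 2 ≤ ∑ k, ‖v k‖ ^ 2 :=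
                  Finset.single_le_sum (f := fun k => ‖v k‖ ^ 2)
                    (fun k _ => by positivity) (Finset.mem_univ i)
                have hj : ‖v j‖ ^ 2 ≤ ∑ k, ‖v k‖ ^ 2 :=
                  Finset.single_le_sum (f := fun k => ‖v k‖ ^ 2)
                    (fun k _ => by positivity) (Finset.mem_univ j)
                linarith
        calc ‖v i‖ * (‖h i j‖ * ‖v j‖)
            = ‖h i j‖ * (‖v i‖ * ‖v j‖) := by ring
          _ ≤ ‖h i j‖ * ∑ k, ‖v k‖ ^ 2 :=
              mul_le_mul_of_nonneg_left h1 (by positivity)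
    _ = (∑ i, ∑ j, ‖h i j‖) * ∑ i, ‖v i‖ ^ 2 := by
        rw [Finset.sum_mul]
        exact Finset.sum_congr rfl fun i _ => (Finset.sum_mul _ _ _).symm

lemma exists_smul_one_add_posSemidef {h : Matrix n n ℂ} (hh : h.IsHermitian) :
    ∃ c : ℝ, 0 ≤ c ∧ (((c:ℂ) • (1 : Matrix n n ℂ)) + h).PosSemidef := by
  set c : ℝ := ∑ i, ∑ j, ‖h i j‖ with hc
  have hc0 : 0 ≤ c := Finset.sum_nonneg fun i _ => Finset.sum_nonneg fun j _ => by positivity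
  refine ⟨c, hc0, Matrix.PosSemidef.of_dotProduct_mulVec_nonneg ?_ fun v => ?_⟩
  · show (((c:ℂ) • (1 : Matrix n n ℂ)) + h)ᴴ = _
    rw [conjTranspose_add, conjTranspose_smul, conjTranspose_one, hh]
    norm_num
  · have expand : star v ⬝ᵥ (((c:ℂ) • (1 : Matrix n n ℂ) + h) *ᵥ v)
        = (c:ℂ) * (star v ⬝ᵥ v) + star v ⬝ᵥ h *ᵥ v := by
      rw [add_mulVec, dotProduct_add, smul_mulVec, one_mulVec, dotProduct_smul,
        smul_eq_mul]
    rw [expand]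
    have hvv : star v ⬝ᵥ v = ((∑ i, ‖v i‖ ^ 2 : ℝ) : ℂ) := by
      simp only [dotProduct, Pi.star_apply, Complex.star_def, Complex.ofReal_sum]
      refine Finset.sum_congr rfl fun i _ => ?_
      rw [← Complex.normSq_eq_norm_sq, ← Complex.mul_conj]
      ring
    set S : ℝ := ∑ i, ‖v i‖ ^ 2 with hS
    have hS0 : 0 ≤ S := Finset.sum_nonneg fun i _ => by positivity
    set q : ℂ := star v ⬝ᵥ h *ᵥ v with hq
    have hqim : q.im = 0 := Complex.conj_eq_iff_im.mp (herm_quad_conj hh v)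
    have hqre : -(c * S) ≤ q.re := by
      have h1 : ‖q‖ ≤ c * S := quad_bound v
      have h2 : |q.re| ≤ ‖q‖ := Complex.abs_re_le_norm q
      cases abs_le.mp (h2.trans h1) with
      | intro a b => linarith
    rw [hvv, Complex.nonneg_iff]
    constructor
    · simp only [Complex.add_re, Complex.mul_re, Complex.ofReal_re, Complex.ofReal_im]
      nlinarith
    · simp [Complex.add_im, Complex.mul_im, hqim]

lemma real_smul_posSemidef {r : ℝ} (hr : 0 ≤ r) {P : Matrix n n ℂ} (hP : P.PosSemidef) :
    (r • P).PosSemidef := by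
  have hrs : r • P = (r:ℂ) • P := by
    rw [← algebraMap_smul ℂ r P]; rfl
  rw [hrs]
  refine Matrix.PosSemidef.of_dotProduct_mulVec_nonneg ?_ ?_
  · show ((r:ℂ) • P)ᴴ = (r:ℂ) • P
    rw [conjTranspose_smul, hP.1]
    norm_num
  · intro v
    have : star v ⬝ᵥ ((r:ℂ) • P) *ᵥ v = (r:ℂ) * (star v ⬝ᵥ P *ᵥ v) := by
      rw [smul_mulVec, dotProduct_smul, smul_eq_mul]
    rw [this]
    have h0 := hP.dotProduct_mulVec_nonneg v
    rw [Complex.nonneg_iff] at h0 ⊢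
    constructor
    · simp only [Complex.mul_re, Complex.ofReal_re, Complex.ofReal_im]
      nlinarith [h0.1]
    · simp [Complex.mul_im, ← h0.2]

variable {d t : ℕ}

/-- blocks of a big matrix -/
def blk (m : Matrix (Fin t × Fin d) (Fin t × Fin d) ℂ) (i j : Fin t) :
    Matrix (Fin d) (Fin d) ℂ := Matrix.of fun a b => m (i,a) (j,b)

/-- embedding of a small matrix into the (i,j) block -/
def emb (i j : Fin t) (x : Matrix (Fin d) (Fin d) ℂ) :
    Matrix (Fin t × Fin d) (Fin t × Fin d) ℂ :=
  Matrix.of fun p q => if p.1 = i ∧ q.1 = j then x p.2 q.2 else 0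

lemma blk_add (m m' : Matrix (Fin t × Fin d) (Fin t × Fin d) ℂ) (i j : Fin t) :
    blk (m + m') i j = blk m i j + blk m' i j := rfl

lemma blk_smul (c : ℂ) (m : Matrix (Fin t × Fin d) (Fin t × Fin d) ℂ) (i j : Fin t) :
    blk (c • m) i j = c • blk m i j := rfl

lemma blk_zero (i j : Fin t) : blk (0 : Matrix (Fin t × Fin d) (Fin t × Fin d) ℂ) i j = 0 := rfl

lemma blk_conjTranspose (m : Matrix (Fin t × Fin d) (Fin t × Fin d) ℂ) (i j : Fin t) :
    blk mᴴ i j = (blk m j i)ᴴ := rfl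

lemma blk_one (i j : Fin t) :
    blk (1 : Matrix (Fin t × Fin d) (Fin t × Fin d) ℂ) i j
      = if i = j then (1 : Matrix (Fin d) (Fin d) ℂ) else 0 := by
  ext a b
  by_cases hij : i = j <;> by_cases hab : a = b <;>
    simp [blk, one_apply, Prod.ext_iff, hij, hab]

lemma blk_emb (i j i' j' : Fin t) (x : Matrix (Fin d) (Fin d) ℂ) :
    blk (emb i j x) i' j' = if i' = i ∧ j' = j then x else 0 := by
  ext a b
  by_cases h : i' = i ∧ j' = j <;> simp [blk, emb, h]

lemma emb_add (i j : Fin t) (x y : Matrix (Fin d) (Fin d) ℂ) :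
    emb i j (x + y) = emb i j x + emb i j y := by
  ext p q
  by_cases h : p.1 = i ∧ q.1 = j <;> simp [emb, h]

lemma emb_smul (i j : Fin t) (c : ℂ) (x : Matrix (Fin d) (Fin d) ℂ) :
    emb i j (c • x) = c • emb i j x := by
  ext p q
  by_cases h : p.1 = i ∧ q.1 = j <;> simp [emb, h]

lemma emb_conjTranspose (i j : Fin t) (x : Matrix (Fin d) (Fin d) ℂ) :
    (emb i j x)ᴴ = emb j i xᴴ := by
  ext p q
  by_cases h : p.1 = j ∧ q.1 = i <;>
    simp [emb, conjTranspose_apply, h, and_comm]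

end ArvesonAux

open ArvesonAux

/-- Arveson's extension theorem, finite-dimensional version: a completely
positive map `ψ` on a concrete operator system `X ⊆ Mat_d(ℂ)` (a unital `*`-closed complex
subspace) into `Mat_t(ℂ)` extends to a completely positive map `φ : Mat_d(ℂ) → Mat_t(ℂ)`. -/
theorem arveson_extension {d t : ℕ}
    (X : Submodule ℂ (Matrix (Fin d) (Fin d) ℂ))
    (hone : (1 : Matrix (Fin d) (Fin d) ℂ) ∈ X)
    (hstar : ∀ x ∈ X, xᴴ ∈ X)
    (ψ : X →ₗ[ℂ] Matrix (Fin t) (Fin t) ℂ)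
    (hcp : ∀ (s : ℕ) (A : Fin s → Fin s → X),
      BlockPosSemidef (fun k l => (A k l : Matrix (Fin d) (Fin d) ℂ)) →
      BlockPosSemidef (fun k l => ψ (A k l))) :
    ∃ φ : Matrix (Fin d) (Fin d) ℂ →ₗ[ℂ] Matrix (Fin t) (Fin t) ℂ,
      (∀ (s : ℕ) (A : Fin s → Fin s → Matrix (Fin d) (Fin d) ℂ),
        BlockPosSemidef A → BlockPosSemidef (fun k l => φ (A k l))) ∧
      ∀ x : X, φ x = ψ x := by
  classical
  -- the subspace `Y` of big matrices whose blocks lie in `X`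
  let Y : Submodule ℂ (Matrix (Fin t × Fin d) (Fin t × Fin d) ℂ) :=
    { carrier := {m | ∀ i j, blk m i j ∈ X}
      add_mem' := fun ha hb i j => by rw [blk_add]; exact X.add_mem (ha i j) (hb i j)
      zero_mem' := fun i j => by rw [blk_zero]; exact X.zero_mem
      smul_mem' := fun c {m} hm i j => by rw [blk_smul]; exact X.smul_mem c (hm i j) }
  have hYstar : ∀ m ∈ Y, mᴴ ∈ Y := fun m hm i j => by
    rw [blk_conjTranspose]; exact hstar _ (hm j i)
  have hYone : (1 : Matrix (Fin t × Fin d) (Fin t × Fin d) ℂ) ∈ Y := fun i j => by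
    rw [blk_one]
    by_cases h : i = j <;> simp [h, hone, X.zero_mem]
  -- the linear functional `F` on `Y`
  let blkL : Fin t → Fin t →
      (Matrix (Fin t × Fin d) (Fin t × Fin d) ℂ →ₗ[ℂ] Matrix (Fin d) (Fin d) ℂ) :=
    fun i j => { toFun := fun m => blk m i j
                 map_add' := fun m m' => blk_add m m' i j
                 map_smul' := fun c m => blk_smul c m i j }
  let entry : Fin t → Fin t → (Matrix (Fin t) (Fin t) ℂ →ₗ[ℂ] ℂ) :=
    fun i j => { toFun := fun m => m i j, map_add' := fun _ _ => rfl,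
                 map_smul' := fun _ _ => rfl }
  let F : Y →ₗ[ℂ] ℂ :=
    ∑ i, ∑ j, (entry i j).comp (ψ.comp ((blkL i j).restrict
      (p := Y) (q := X) (fun m hm => hm i j)))
  have hFapply : ∀ B : Y, F B
      = ∑ i, ∑ j, ψ ⟨blk (B : Matrix (Fin t × Fin d) (Fin t × Fin d) ℂ) i j, B.2 i j⟩ i j := by
    intro B
    simp only [F, LinearMap.coe_sum, Finset.sum_apply, LinearMap.comp_apply,
      LinearMap.restrict_apply]
    rfl
  -- positivity of `F` on PSD elements of `Y`
  have hFpos : ∀ B : Y, (B : Matrix (Fin t × Fin d) (Fin t × Fin d) ℂ).PosSemidef → 0 ≤ F B := by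
    intro B hB
    have hblock := hcp t (fun i j => ⟨blk (B : Matrix (Fin t × Fin d) (Fin t × Fin d) ℂ) i j,
      B.2 i j⟩) ?_
    · set C : Matrix (Fin t × Fin t) (Fin t × Fin t) ℂ :=
        Matrix.of fun p q => ψ ⟨blk (B : Matrix (Fin t × Fin d) (Fin t × Fin d) ℂ) p.1 q.1,
          B.2 p.1 q.1⟩ p.2 q.2 with hC
      have hCpsd : C.PosSemidef := hblock
      set u : Fin t × Fin t → ℂ := fun p => if p.1 = p.2 then 1 else 0 with hu
      have h2 := hCpsd.dotProduct_mulVec_nonneg u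
      have h3 : star u ⬝ᵥ C *ᵥ u = F B := by
        rw [hFapply]
        simp only [dotProduct, mulVec, Pi.star_apply, Fintype.sum_prod_type, hu, hC,
          Matrix.of_apply, apply_ite, star_one, star_zero, ite_mul, one_mul, zero_mul,
          mul_ite, mul_one, mul_zero, Finset.sum_ite_eq, Finset.sum_ite_eq',
          Finset.mem_univ, if_true]
      rwa [h3] at h2
    · show (Matrix.of fun (p q : Fin t × Fin d) =>
        blk (B : Matrix (Fin t × Fin d) (Fin t × Fin d) ℂ) p.1 q.1 p.2 q.2).PosSemidef
      have : (Matrix.of fun (p q : Fin t × Fin d) =>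
          blk (B : Matrix (Fin t × Fin d) (Fin t × Fin d) ℂ) p.1 q.1 p.2 q.2)
          = (B : Matrix (Fin t × Fin d) (Fin t × Fin d) ℂ) := by
        ext ⟨i, a⟩ ⟨j, b⟩; rfl
      rw [this]; exact hB
  -- equivalences `Fin 1 × Fin m ≃ Fin m`
  let e1d : (Fin 1 × Fin d) ≃ Fin d :=
    ⟨fun p => p.2, fun a => (0, a), fun p => by
      obtain ⟨i, a⟩ := p; exact Prod.ext (Subsingleton.elim _ _) rfl, fun a => rfl⟩
  let e1t : (Fin 1 × Fin t) ≃ Fin t :=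
    ⟨fun p => p.2, fun a => (0, a), fun p => by
      obtain ⟨i, a⟩ := p; exact Prod.ext (Subsingleton.elim _ _) rfl, fun a => rfl⟩
  -- `ψ` is a positive map
  have hpos1 : ∀ p : X, (p : Matrix (Fin d) (Fin d) ℂ).PosSemidef → (ψ p).PosSemidef := by
    intro p hp
    have h1 := hcp 1 (fun _ _ => p) ?_
    · have h2 : ((ψ p).submatrix e1t e1t).PosSemidef := by
        have heq : ((ψ p).submatrix e1t e1t)
            = Matrix.of fun (pq qq : Fin 1 × Fin t) => ψ p pq.2 qq.2 := by
          ext ⟨i, a⟩ ⟨j, b⟩; rfl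
        rw [heq]; exact h1
      exact (posSemidef_submatrix_equiv e1t).mp h2
    · show (Matrix.of fun (pq qq : Fin 1 × Fin d) =>
        (p : Matrix (Fin d) (Fin d) ℂ) pq.2 qq.2).PosSemidef
      have heq : (Matrix.of fun (pq qq : Fin 1 × Fin d) =>
          (p : Matrix (Fin d) (Fin d) ℂ) pq.2 qq.2)
          = (p : Matrix (Fin d) (Fin d) ℂ).submatrix e1d e1d := by
        ext ⟨i, a⟩ ⟨j, b⟩; rfl
      rw [heq]; exact (posSemidef_submatrix_equiv e1d).mpr hp
  -- `ψ` maps hermitian elements to hermitian matrices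
  have hψherm : ∀ x : X, (x : Matrix (Fin d) (Fin d) ℂ).IsHermitian → (ψ x).IsHermitian := by
    intro x hx
    obtain ⟨c, -, hpsd⟩ := exists_smul_one_add_posSemidef hx
    have hmem : ((c:ℂ) • (1 : Matrix (Fin d) (Fin d) ℂ) + (x : Matrix (Fin d) (Fin d) ℂ)) ∈ X :=
      X.add_mem (X.smul_mem _ hone) x.2
    have hsplit : (⟨(c:ℂ) • (1 : Matrix (Fin d) (Fin d) ℂ) + (x : Matrix (Fin d) (Fin d) ℂ),
        hmem⟩ : X) = (c:ℂ) • (⟨1, hone⟩ : X) + x := rfl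
    have h1 : (ψ ⟨(c:ℂ) • 1 + (x : Matrix (Fin d) (Fin d) ℂ), hmem⟩).IsHermitian :=
      (hpos1 _ hpsd).1
    have hone' : (ψ ⟨1, hone⟩).IsHermitian := (hpos1 ⟨1, hone⟩ Matrix.PosSemidef.one).1
    have h2 : ψ x = ψ ⟨(c:ℂ) • 1 + (x : Matrix (Fin d) (Fin d) ℂ), hmem⟩
        - (c:ℂ) • ψ ⟨1, hone⟩ := by
      rw [hsplit, map_add, _root_.map_smul]; abel
    rw [h2]
    refine h1.sub ?_
    show ((c:ℂ) • ψ ⟨1, hone⟩)ᴴ = _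
    rw [conjTranspose_smul, hone']
    norm_num
  -- `ψ` is star-preserving
  have hψstar : ∀ x : X, ψ ⟨(x : Matrix (Fin d) (Fin d) ℂ)ᴴ, hstar _ x.2⟩ = (ψ x)ᴴ := by
    intro x
    set xs : X := ⟨(x : Matrix (Fin d) (Fin d) ℂ)ᴴ, hstar _ x.2⟩ with hxs
    set h : X := (2⁻¹ : ℂ) • (x + xs) with hh
    set k : X := (-(2⁻¹) * Complex.I) • (x - xs) with hk
    have hcoef : Complex.I * (-(2⁻¹) * Complex.I) = 2⁻¹ := by
      have : Complex.I * (-(2⁻¹) * Complex.I) = -(2⁻¹) * (Complex.I * Complex.I) := by ring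
      rw [this, Complex.I_mul_I]; norm_num
    have hherm : (h : Matrix (Fin d) (Fin d) ℂ).IsHermitian := by
      show ((2⁻¹ : ℂ) • ((x : Matrix (Fin d) (Fin d) ℂ)
        + (x : Matrix (Fin d) (Fin d) ℂ)ᴴ))ᴴ = _
      rw [conjTranspose_smul, conjTranspose_add, conjTranspose_conjTranspose]
      have hs : star (2⁻¹ : ℂ) = 2⁻¹ := by simp
      rw [hs, add_comm]
      rfl
    have hkherm : (k : Matrix (Fin d) (Fin d) ℂ).IsHermitian := by
      show ((-(2⁻¹) * Complex.I) • ((x : Matrix (Fin d) (Fin d) ℂ)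
        - (x : Matrix (Fin d) (Fin d) ℂ)ᴴ))ᴴ = _
      rw [conjTranspose_smul, conjTranspose_sub, conjTranspose_conjTranspose]
      have hs : star (-(2⁻¹) * Complex.I) = 2⁻¹ * Complex.I := by
        simp [Complex.star_def, _root_.map_mul, Complex.conj_I]
      rw [hs]
      have : (x : Matrix (Fin d) (Fin d) ℂ)ᴴ - (x : Matrix (Fin d) (Fin d) ℂ)
          = -((x : Matrix (Fin d) (Fin d) ℂ) - (x : Matrix (Fin d) (Fin d) ℂ)ᴴ) := by
        rw [neg_sub]
      rw [this, smul_neg]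
      rw [show ((2⁻¹ : ℂ) * Complex.I) = -(-(2⁻¹) * Complex.I) by ring, neg_smul, neg_neg]
      rfl
    have hx1 : x = h + Complex.I • k := by
      apply Subtype.ext
      show (x : Matrix (Fin d) (Fin d) ℂ)
        = (2⁻¹ : ℂ) • ((x : Matrix (Fin d) (Fin d) ℂ) + (x : Matrix (Fin d) (Fin d) ℂ)ᴴ)
          + Complex.I • ((-(2⁻¹) * Complex.I) • ((x : Matrix (Fin d) (Fin d) ℂ)
            - (x : Matrix (Fin d) (Fin d) ℂ)ᴴ))
      rw [smul_smul, hcoef]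
      module
    have hx2 : xs = h - Complex.I • k := by
      apply Subtype.ext
      show (x : Matrix (Fin d) (Fin d) ℂ)ᴴ
        = (2⁻¹ : ℂ) • ((x : Matrix (Fin d) (Fin d) ℂ) + (x : Matrix (Fin d) (Fin d) ℂ)ᴴ)
          - Complex.I • ((-(2⁻¹) * Complex.I) • ((x : Matrix (Fin d) (Fin d) ℂ)
            - (x : Matrix (Fin d) (Fin d) ℂ)ᴴ))
      rw [smul_smul, hcoef]
      module
    have e1 := hψherm h hherm
    have e2 := hψherm k hkherm
    have hx1' : ψ x = ψ h + Complex.I • ψ k := by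
      conv_lhs => rw [hx1]
      simp only [map_add, _root_.map_smul]
    have hx2' : ψ xs = ψ h - Complex.I • ψ k := by
      conv_lhs => rw [hx2]
      simp only [map_sub, _root_.map_smul]
    show ψ xs = (ψ x)ᴴ
    rw [hx2', hx1', conjTranspose_add, conjTranspose_smul, e1, e2]
    simp [Complex.star_def, Complex.conj_I, neg_smul, sub_eq_add_neg]
  -- `F` is star-symmetric
  have hFstar : ∀ B : Y, F ⟨(B : Matrix (Fin t × Fin d) (Fin t × Fin d) ℂ)ᴴ, hYstar _ B.2⟩
      = starRingEnd ℂ (F B) := by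
    intro B
    rw [hFapply, hFapply]
    calc ∑ i, ∑ j, ψ ⟨blk ((B : Matrix (Fin t × Fin d) (Fin t × Fin d) ℂ)ᴴ) i j,
          (hYstar _ B.2) i j⟩ i j
        = ∑ i, ∑ j, starRingEnd ℂ
            (ψ ⟨blk (B : Matrix (Fin t × Fin d) (Fin t × Fin d) ℂ) j i, B.2 j i⟩ j i) := by
          refine Finset.sum_congr rfl fun i _ => Finset.sum_congr rfl fun j _ => ?_
          have hsub : (⟨blk ((B : Matrix (Fin t × Fin d) (Fin t × Fin d) ℂ)ᴴ) i j,
              (hYstar _ B.2) i j⟩ : X)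
              = ⟨(blk (B : Matrix (Fin t × Fin d) (Fin t × Fin d) ℂ) j i)ᴴ,
                hstar _ (B.2 j i)⟩ :=
            Subtype.ext (blk_conjTranspose _ i j)
          rw [hsub, hψstar ⟨blk (B : Matrix (Fin t × Fin d) (Fin t × Fin d) ℂ) j i, B.2 j i⟩,
            conjTranspose_apply]
          rfl
      _ = starRingEnd ℂ (∑ i, ∑ j,
            ψ ⟨blk (B : Matrix (Fin t × Fin d) (Fin t × Fin d) ℂ) i j, B.2 i j⟩ i j) := by
          rw [map_sum, Finset.sum_comm]
          exact Finset.sum_congr rfl fun i _ => by rw [map_sum]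
  -- the convex cone of matrices with PSD hermitian part
  let cone : ConvexCone ℝ (Matrix (Fin t × Fin d) (Fin t × Fin d) ℂ) :=
    { carrier := {m | (m + mᴴ).PosSemidef}
      smul_mem' := fun c hc {m} hm => by
        show ((c • m) + (c • m)ᴴ).PosSemidef
        rw [conjTranspose_smul, star_trivial, ← smul_add]
        exact real_smul_posSemidef hc.le hm
      add_mem' := fun {m} hm {m'} hm' => by
        show ((m + m') + (m + m')ᴴ).PosSemidef
        rw [conjTranspose_add]
        rw [show (m + m') + (mᴴ + m'ᴴ) = (m + mᴴ) + (m' + m'ᴴ) by abel]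
        exact hm.add hm' }
  -- the real-linear functional Re ∘ F on Y
  let reF : (Y.restrictScalars ℝ) →ₗ[ℝ] ℝ :=
    { toFun := fun B => (F ⟨B.1, B.2⟩).re
      map_add' := fun B C => by
        have h1 : (⟨(B + C).1, (B + C).2⟩ : Y) = ⟨B.1, B.2⟩ + ⟨C.1, C.2⟩ := rfl
        rw [h1, map_add, Complex.add_re]
      map_smul' := fun r B => by
        have h1 : (⟨(r • B).1, (r • B).2⟩ : Y) = (r : ℂ) • ⟨B.1, B.2⟩ := by
          apply Subtype.ext
          show r • B.1 = (r : ℂ) • B.1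
          rw [← algebraMap_smul ℂ r B.1]; rfl
        rw [h1, _root_.map_smul]
        show ((r:ℂ) • F ⟨B.1, B.2⟩).re = r * (F ⟨B.1, B.2⟩).re
        rw [smul_eq_mul]
        simp [Complex.mul_re] }
  let pmap : Matrix (Fin t × Fin d) (Fin t × Fin d) ℂ →ₗ.[ℝ] ℝ := ⟨Y.restrictScalars ℝ, reF⟩
  have hnonneg : ∀ x : pmap.domain, (x : Matrix (Fin t × Fin d) (Fin t × Fin d) ℂ) ∈ cone →
      0 ≤ pmap x := by
    intro x hx
    have hxY : (x : Matrix (Fin t × Fin d) (Fin t × Fin d) ℂ) ∈ Y := x.2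
    have hmem : ((x : Matrix (Fin t × Fin d) (Fin t × Fin d) ℂ)
        + (x : Matrix (Fin t × Fin d) (Fin t × Fin d) ℂ)ᴴ) ∈ Y :=
      Y.add_mem hxY (hYstar _ hxY)
    have h1 : 0 ≤ F ⟨_, hmem⟩ := hFpos ⟨_, hmem⟩ hx
    have h2 : F ⟨(x : Matrix (Fin t × Fin d) (Fin t × Fin d) ℂ)
        + (x : Matrix (Fin t × Fin d) (Fin t × Fin d) ℂ)ᴴ, hmem⟩
        = F ⟨x.1, hxY⟩ + starRingEnd ℂ (F ⟨x.1, hxY⟩) := by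
      have hsplit : (⟨(x : Matrix (Fin t × Fin d) (Fin t × Fin d) ℂ)
          + (x : Matrix (Fin t × Fin d) (Fin t × Fin d) ℂ)ᴴ, hmem⟩ : Y)
          = ⟨x.1, hxY⟩ + ⟨(x : Matrix (Fin t × Fin d) (Fin t × Fin d) ℂ)ᴴ, hYstar _ hxY⟩ := rfl
      rw [hsplit, map_add, hFstar ⟨x.1, hxY⟩]
    show 0 ≤ (F ⟨x.1, x.2⟩).re
    have h3 := Complex.nonneg_iff.mp h1
    rw [h2] at h3
    have h4 := h3.1
    simp only [Complex.add_re, Complex.conj_re] at h4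
    linarith
  have hdense : ∀ y, ∃ x : pmap.domain,
      (x : Matrix (Fin t × Fin d) (Fin t × Fin d) ℂ) + y ∈ cone := by
    intro y
    have hherm : (y + yᴴ).IsHermitian := by
      show (y + yᴴ)ᴴ = y + yᴴ
      rw [conjTranspose_add, conjTranspose_conjTranspose, add_comm]
    obtain ⟨c, -, hpsd⟩ := exists_smul_one_add_posSemidef hherm
    have hmem : ((c/2 : ℝ) • (1 : Matrix (Fin t × Fin d) (Fin t × Fin d) ℂ))
        ∈ Y.restrictScalars ℝ := by
      show ((c/2 : ℝ) • (1 : Matrix (Fin t × Fin d) (Fin t × Fin d) ℂ)) ∈ Y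
      have h1 : (c/2 : ℝ) • (1 : Matrix (Fin t × Fin d) (Fin t × Fin d) ℂ)
          = ((c/2 : ℝ) : ℂ) • 1 := by
        rw [← algebraMap_smul ℂ (c/2 : ℝ)]; rfl
      rw [h1]
      exact Y.smul_mem _ hYone
    refine ⟨⟨_, hmem⟩, ?_⟩
    show (((c/2 : ℝ) • (1 : Matrix (Fin t × Fin d) (Fin t × Fin d) ℂ) + y)
      + ((c/2 : ℝ) • (1 : Matrix (Fin t × Fin d) (Fin t × Fin d) ℂ) + y)ᴴ).PosSemidef
    have heq : (((c/2 : ℝ) • (1 : Matrix (Fin t × Fin d) (Fin t × Fin d) ℂ) + y)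
        + ((c/2 : ℝ) • (1 : Matrix (Fin t × Fin d) (Fin t × Fin d) ℂ) + y)ᴴ)
        = (c : ℂ) • 1 + (y + yᴴ) := by
      rw [conjTranspose_add, conjTranspose_smul, conjTranspose_one, star_trivial]
      have h1 : (c/2 : ℝ) • (1 : Matrix (Fin t × Fin d) (Fin t × Fin d) ℂ)
          = ((c/2 : ℝ) : ℂ) • 1 := by
        rw [← algebraMap_smul ℂ (c/2 : ℝ)]; rfl
      rw [h1]
      push_cast
      module
    rw [heq]; exact hpsd
  obtain ⟨g, hg_eq, hg_nonneg⟩ := riesz_extension (cone.toPointedCone (by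
    show ((0 : Matrix (Fin t × Fin d) (Fin t × Fin d) ℂ) + 0ᴴ).PosSemidef
    rw [conjTranspose_zero, add_zero]; exact Matrix.PosSemidef.zero)) pmap hnonneg hdense
  have hgY : ∀ (m : Matrix (Fin t × Fin d) (Fin t × Fin d) ℂ) (hm : m ∈ Y),
      g m = (F ⟨m, hm⟩).re := fun m hm => hg_eq ⟨m, hm⟩
  have hgpos : ∀ m : Matrix (Fin t × Fin d) (Fin t × Fin d) ℂ, m.PosSemidef → 0 ≤ g m := by
    intro m hm
    refine hg_nonneg m ?_
    show (m + mᴴ).PosSemidef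
    rw [hm.1]
    exact hm.add hm
  have hgI : ∀ m : Matrix (Fin t × Fin d) (Fin t × Fin d) ℂ, m.PosSemidef →
      g (Complex.I • m) = 0 := by
    intro m hm
    have h1 : (Complex.I • m) + (Complex.I • m)ᴴ = 0 := by
      rw [conjTranspose_smul, hm.1]
      rw [show star Complex.I = -Complex.I by simp [Complex.star_def, Complex.conj_I]]
      rw [neg_smul]
      exact add_neg_cancel _
    have h2 : 0 ≤ g (Complex.I • m) := hg_nonneg _ (by
      show ((Complex.I • m) + (Complex.I • m)ᴴ).PosSemidef
      rw [h1]; exact Matrix.PosSemidef.zero)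
    have h3 : 0 ≤ g (-(Complex.I • m)) := hg_nonneg _ (by
      show ((-(Complex.I • m)) + (-(Complex.I • m))ᴴ).PosSemidef
      rw [conjTranspose_neg]
      rw [show -(Complex.I • m) + -(Complex.I • m)ᴴ
        = -((Complex.I • m) + (Complex.I • m)ᴴ) by abel]
      rw [h1, neg_zero]
      exact Matrix.PosSemidef.zero)
    rw [map_neg] at h3
    linarith
  -- the complexification of g
  set G0 : Matrix (Fin t × Fin d) (Fin t × Fin d) ℂ → ℂ :=
    fun m => ((g m : ℝ) : ℂ) - Complex.I * ((g (Complex.I • m) : ℝ) : ℂ) with hG0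
  have hG0add : ∀ m m', G0 (m + m') = G0 m + G0 m' := by
    intro m m'
    rw [hG0]
    simp only [smul_add, map_add]
    push_cast
    ring
  have hG0rsmul : ∀ (r : ℝ) (m : Matrix (Fin t × Fin d) (Fin t × Fin d) ℂ),
      G0 ((r : ℂ) • m) = (r : ℂ) * G0 m := by
    intro r m
    have h1 : ∀ mm : Matrix (Fin t × Fin d) (Fin t × Fin d) ℂ, (r : ℂ) • mm = r • mm :=
      fun mm => by rw [← algebraMap_smul ℂ r mm]; rfl
    have h2 : Complex.I • ((r : ℂ) • m) = (r : ℂ) • (Complex.I • m) := smul_comm _ _ _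
    have e1 : g ((r : ℂ) • m) = r * g m := by rw [h1, g.map_smul]; rfl
    have e2 : g (Complex.I • ((r : ℂ) • m)) = r * g (Complex.I • m) := by
      rw [h2, h1, g.map_smul]; rfl
    rw [hG0]
    dsimp only
    rw [e1, e2]
    push_cast
    ring
  have hG0I : ∀ m : Matrix (Fin t × Fin d) (Fin t × Fin d) ℂ,
      G0 (Complex.I • m) = Complex.I * G0 m := by
    intro m
    have h1 : Complex.I • (Complex.I • m) = -m := by
      rw [smul_smul, Complex.I_mul_I, neg_one_smul]
    rw [hG0]
    simp only [h1, map_neg]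
    push_cast
    linear_combination ((g (Complex.I • m) : ℝ) : ℂ) * Complex.I_mul_I
  have hG0smul : ∀ (c : ℂ) (m : Matrix (Fin t × Fin d) (Fin t × Fin d) ℂ),
      G0 (c • m) = c * G0 m := by
    intro c m
    have hdecomp : c • m = (c.re : ℂ) • m + (c.im : ℂ) • (Complex.I • m) := by
      rw [smul_smul, ← add_smul]
      congr 1
      exact (Complex.re_add_im c).symm
    rw [hdecomp, hG0add, hG0rsmul, hG0rsmul, hG0I]
    rw [show (c.re : ℂ) * G0 m + (c.im : ℂ) * (Complex.I * G0 m)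
      = ((c.re : ℂ) + (c.im : ℂ) * Complex.I) * G0 m by ring]
    rw [Complex.re_add_im]
  have hGY : ∀ (m : Matrix (Fin t × Fin d) (Fin t × Fin d) ℂ) (hm : m ∈ Y),
      G0 m = F ⟨m, hm⟩ := by
    intro m hm
    have h1 : g m = (F ⟨m, hm⟩).re := hgY m hm
    have hImem : Complex.I • m ∈ Y := Y.smul_mem _ hm
    have h2 : g (Complex.I • m) = (F ⟨Complex.I • m, hImem⟩).re := hgY _ hImem
    have h3 : (⟨Complex.I • m, hImem⟩ : Y) = Complex.I • ⟨m, hm⟩ := rfl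
    rw [h3, F.map_smul] at h2
    have h4 : (Complex.I • F ⟨m, hm⟩).re = -(F ⟨m, hm⟩).im := by
      rw [smul_eq_mul]
      simp [Complex.mul_re]
    rw [hG0]; dsimp only; rw [h1, h2, h4]
    apply Complex.ext <;> simp
  have hGposval : ∀ m : Matrix (Fin t × Fin d) (Fin t × Fin d) ℂ, m.PosSemidef →
      G0 m = ((g m : ℝ) : ℂ) := by
    intro m hm
    rw [hG0]; dsimp only; rw [hgI m hm]
    simp
  -- the symmetrized functional G'
  set G' : Matrix (Fin t × Fin d) (Fin t × Fin d) ℂ → ℂ :=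
    fun m => (2⁻¹ : ℂ) * (G0 m + starRingEnd ℂ (G0 mᴴ)) with hG'
  have hG'add : ∀ m m', G' (m + m') = G' m + G' m' := by
    intro m m'
    rw [hG']
    simp only [conjTranspose_add, hG0add, map_add]
    ring
  have hG'smul : ∀ (c : ℂ) m, G' (c • m) = c * G' m := by
    intro c m
    rw [hG']
    simp only [conjTranspose_smul, hG0smul, Complex.star_def, _root_.map_mul, Complex.conj_conj]
    ring
  have hG'star : ∀ m, G' mᴴ = starRingEnd ℂ (G' m) := by
    intro m
    rw [hG']
    simp only [conjTranspose_conjTranspose, _root_.map_mul, map_add, Complex.conj_conj]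
    rw [show starRingEnd ℂ (2⁻¹ : ℂ) = (2⁻¹ : ℂ) by rw [map_inv₀, map_ofNat]]
    ring
  have hG'Y : ∀ (m : Matrix (Fin t × Fin d) (Fin t × Fin d) ℂ) (hm : m ∈ Y),
      G' m = F ⟨m, hm⟩ := by
    intro m hm
    have h1 : G0 mᴴ = starRingEnd ℂ (F ⟨m, hm⟩) := by
      rw [hGY mᴴ (hYstar _ hm)]
      exact hFstar ⟨m, hm⟩
    rw [hG']; dsimp only; rw [hGY m hm, h1, Complex.conj_conj]
    ring
  have hG'pos : ∀ m : Matrix (Fin t × Fin d) (Fin t × Fin d) ℂ, m.PosSemidef → 0 ≤ G' m := by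
    intro m hm
    have h1 : G0 mᴴ = G0 m := by rw [hm.1]
    rw [hG']; dsimp only; rw [h1, hGposval m hm, Complex.conj_ofReal]
    rw [show (2⁻¹ : ℂ) * (((g m : ℝ) : ℂ) + ((g m : ℝ) : ℂ)) = ((g m : ℝ) : ℂ) by ring]
    rw [Complex.zero_le_real]
    exact hgpos m hm
  -- the extension φ
  let φ : Matrix (Fin d) (Fin d) ℂ →ₗ[ℂ] Matrix (Fin t) (Fin t) ℂ :=
    { toFun := fun x => Matrix.of fun i j => G' (emb i j x)
      map_add' := fun x y => by
        ext i j
        show G' (emb i j (x + y)) = G' (emb i j x) + G' (emb i j y)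
        rw [emb_add, hG'add]
      map_smul' := fun c x => by
        ext i j
        show G' (emb i j (c • x)) = c • G' (emb i j x)
        rw [emb_smul, hG'smul, smul_eq_mul] }
  have hφapply : ∀ (x : Matrix (Fin d) (Fin d) ℂ) i j, φ x i j = G' (emb i j x) :=
    fun x i j => rfl
  -- φ extends ψ
  have hext : ∀ x : X, φ (x : Matrix (Fin d) (Fin d) ℂ) = ψ x := by
    intro x
    ext i j
    rw [hφapply]
    have hmem : emb i j (x : Matrix (Fin d) (Fin d) ℂ) ∈ Y := by
      intro i' j'
      rw [blk_emb]
      by_cases hc : i' = i ∧ j' = j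
      · rw [if_pos hc]; exact x.2
      · rw [if_neg hc]; exact X.zero_mem
    rw [hG'Y _ hmem, hFapply]
    have hterm : ∀ i' j',
        ψ ⟨blk (emb i j (x : Matrix (Fin d) (Fin d) ℂ)) i' j',
          (⟨emb i j (x : Matrix (Fin d) (Fin d) ℂ), hmem⟩ : Y).2 i' j'⟩ i' j'
        = if i' = i ∧ j' = j then ψ x i' j' else 0 := by
      intro i' j'
      by_cases hc : i' = i ∧ j' = j
      · have heq : (⟨blk (emb i j (x : Matrix (Fin d) (Fin d) ℂ)) i' j',
            (⟨emb i j (x : Matrix (Fin d) (Fin d) ℂ), hmem⟩ : Y).2 i' j'⟩ : X) = x :=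
          Subtype.ext (by
            show blk (emb i j (x : Matrix (Fin d) (Fin d) ℂ)) i' j'
              = (x : Matrix (Fin d) (Fin d) ℂ)
            rw [blk_emb, if_pos hc])
        rw [heq, if_pos hc]
      · have heq : (⟨blk (emb i j (x : Matrix (Fin d) (Fin d) ℂ)) i' j',
            (⟨emb i j (x : Matrix (Fin d) (Fin d) ℂ), hmem⟩ : Y).2 i' j'⟩ : X) = 0 :=
          Subtype.ext (by
            show blk (emb i j (x : Matrix (Fin d) (Fin d) ℂ)) i' j' = (0 : Matrix (Fin d) (Fin d) ℂ)
            rw [blk_emb, if_neg hc])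
        rw [heq, if_neg hc, map_zero]
        rfl
    rw [Finset.sum_congr rfl fun i' (_ : i' ∈ Finset.univ) =>
      Finset.sum_congr rfl fun j' (_ : j' ∈ Finset.univ) => hterm i' j']
    simp [ite_and, Finset.sum_ite_eq', Finset.sum_ite_eq]
  refine ⟨φ, ?_, hext⟩
  -- complete positivity of φ
  intro s A hA
  show (Matrix.of fun (p q : Fin s × Fin t) => φ (A p.1 q.1) p.2 q.2).PosSemidef
  set Abig : Matrix (Fin s × Fin d) (Fin s × Fin d) ℂ :=
    Matrix.of fun p q => A p.1 q.1 p.2 q.2 with hAbig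
  have hAbigpsd : Abig.PosSemidef := hA
  have hAc : ∀ k l a b, star (A l k b a) = A k l a b := by
    intro k l a b
    have h := congrFun (congrFun hAbigpsd.1 (k, a)) (l, b)
    simpa [conjTranspose_apply, hAbig] using h
  refine Matrix.PosSemidef.of_dotProduct_mulVec_nonneg ?_ ?_
  · -- Hermitian
    ext p q
    rw [conjTranspose_apply, Matrix.of_apply, Matrix.of_apply, hφapply, hφapply]
    rw [show star (G' (emb q.2 p.2 (A q.1 p.1)))
      = starRingEnd ℂ (G' (emb q.2 p.2 (A q.1 p.1))) from rfl]
    rw [← hG'star, emb_conjTranspose]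
    have hAeq : (A q.1 p.1)ᴴ = A p.1 q.1 := by
      ext a b
      rw [conjTranspose_apply]
      exact hAc p.1 q.1 a b
    rw [hAeq]
  · -- quadratic form
    intro v
    set W : Matrix (Fin s × Fin d) (Fin t × Fin d) ℂ :=
      Matrix.of fun p q => if p.2 = q.2 then v (p.1, q.1) else 0 with hW
    have hTpsd := hAbigpsd.conjTranspose_mul_mul_same W
    have hT : Wᴴ * Abig * W = ∑ k : Fin s, ∑ i : Fin t, ∑ l : Fin s, ∑ j : Fin t,
        (star (v (k, i)) * v (l, j)) • emb i j (A k l) := by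
      ext p q
      obtain ⟨i', a⟩ := p
      obtain ⟨j', b⟩ := q
      simp only [Matrix.mul_apply, conjTranspose_apply, Matrix.of_apply, hW, hAbig,
        Fintype.sum_prod_type, Matrix.sum_apply, Matrix.smul_apply, emb, smul_eq_mul,
        apply_ite, star_zero, ite_mul, zero_mul, mul_ite, mul_zero, ite_and,
        Finset.sum_ite_irrel, Finset.sum_const_zero,
        Finset.sum_ite_eq, Finset.sum_ite_eq', Finset.mem_univ, if_true]
      simp only [Finset.sum_mul]
      rw [Finset.sum_comm]
      exact Finset.sum_congr rfl fun k _ => Finset.sum_congr rfl fun l _ => by ring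
    have hGsum : G' (∑ k : Fin s, ∑ i : Fin t, ∑ l : Fin s, ∑ j : Fin t,
        (star (v (k, i)) * v (l, j)) • emb i j (A k l))
        = ∑ k : Fin s, ∑ i : Fin t, ∑ l : Fin s, ∑ j : Fin t,
          (star (v (k, i)) * v (l, j)) * G' (emb i j (A k l)) := by
      let Glin : Matrix (Fin t × Fin d) (Fin t × Fin d) ℂ →ₗ[ℂ] ℂ :=
        { toFun := G', map_add' := hG'add, map_smul' := fun c m => by
            show G' (c • m) = c • G' m
            rw [hG'smul, smul_eq_mul] }
      show Glin (∑ k : Fin s, ∑ i : Fin t, ∑ l : Fin s, ∑ j : Fin t,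
        (star (v (k, i)) * v (l, j)) • emb i j (A k l)) = _
      rw [map_sum]
      refine Finset.sum_congr rfl fun k _ => ?_
      rw [map_sum]
      refine Finset.sum_congr rfl fun i _ => ?_
      rw [map_sum]
      refine Finset.sum_congr rfl fun l _ => ?_
      rw [map_sum]
      refine Finset.sum_congr rfl fun j _ => ?_
      rw [Glin.map_smul, smul_eq_mul]
      rfl
    have hquad : star v ⬝ᵥ ((Matrix.of fun (p q : Fin s × Fin t) =>
        φ (A p.1 q.1) p.2 q.2) *ᵥ v)
        = ∑ k : Fin s, ∑ i : Fin t, ∑ l : Fin s, ∑ j : Fin t,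
          (star (v (k, i)) * v (l, j)) * G' (emb i j (A k l)) := by
      simp only [dotProduct, mulVec, Pi.star_apply, Fintype.sum_prod_type, Finset.mul_sum,
        Matrix.of_apply]
      refine Finset.sum_congr rfl fun k _ => Finset.sum_congr rfl fun i _ =>
        Finset.sum_congr rfl fun l _ => Finset.sum_congr rfl fun j _ => ?_
      rw [hφapply]
      ring
    rw [hquad, ← hGsum, ← hT]
    exact hG'pos _ hTpsd
end
end

section
/- (Choi–Kraus representation) A ℂ-linear map Φ: Mat_d(ℂ) → Mat_t(ℂ) is completely positive, i.e., for every s ≥ 1 the map Φ ⊗ id_{Mat_s}: Mat_{ds}(ℂ) → Mat_{ts}(ℂ) maps positive semidefinite matrices to positive semidefinite matrices, if and only if there exist finitely many matrices V_1,…,V_r ∈ Mat_{d,t}(ℂ) such that Φ(A) = Σ_{i=1}^r V_i^* A V_i for every A ∈ Mat_d(ℂ). -/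
open Matrix
open scoped ComplexOrder

noncomputable section

/-- The map `Φ ⊗ id_{Mat_s}` on `Mat_{ds}(ℂ) = Mat_s(Mat_d(ℂ))`, acting blockwise: the
`(k,l)` block (a `d × d` matrix) is sent through `Φ`. -/
def blockApply {d t : ℕ} (Φ : Matrix (Fin d) (Fin d) ℂ →ₗ[ℂ] Matrix (Fin t) (Fin t) ℂ)
    (s : ℕ) (A : Matrix (Fin s × Fin d) (Fin s × Fin d) ℂ) :
    Matrix (Fin s × Fin t) (Fin s × Fin t) ℂ :=
  Matrix.of fun p q => Φ (Matrix.of fun a b => A (p.1, a) (q.1, b)) p.2 q.2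

/-- `Φ` is completely positive: for every `s ≥ 1`, `Φ ⊗ id_{Mat_s}` maps positive
semidefinite matrices to positive semidefinite matrices. -/
def IsCompletelyPositive {d t : ℕ}
    (Φ : Matrix (Fin d) (Fin d) ℂ →ₗ[ℂ] Matrix (Fin t) (Fin t) ℂ) : Prop :=
  ∀ (s : ℕ) (A : Matrix (Fin s × Fin d) (Fin s × Fin d) ℂ),
    A.PosSemidef → (blockApply Φ s A).PosSemidef

lemma psd_sum {n ι : Type*} [Fintype n] [DecidableEq n] (s : Finset ι)
    (f : ι → Matrix n n ℂ) (h : ∀ i ∈ s, (f i).PosSemidef) :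
    (∑ i ∈ s, f i).PosSemidef := by
  classical
  induction s using Finset.induction_on with
  | empty => simpa using Matrix.PosSemidef.zero
  | insert _ _ hx ih =>
    rw [Finset.sum_insert hx]
    exact (h _ (Finset.mem_insert_self _ _)).add
      (ih fun i hi => h i (Finset.mem_insert_of_mem hi))

/-- Choi–Kraus representation: a ℂ-linear map `Φ : Mat_d(ℂ) → Mat_t(ℂ)` is
completely positive iff there are finitely many `V_i ∈ Mat_{d,t}(ℂ)` with
`Φ(A) = Σᵢ Vᵢ^* A Vᵢ` for all `A`. -/
theorem choi_kraus {d t : ℕ}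
    (Φ : Matrix (Fin d) (Fin d) ℂ →ₗ[ℂ] Matrix (Fin t) (Fin t) ℂ) :
    IsCompletelyPositive Φ ↔
      ∃ (r : ℕ) (V : Fin r → Matrix (Fin d) (Fin t) ℂ),
        ∀ A : Matrix (Fin d) (Fin d) ℂ, Φ A = ∑ i, (V i)ᴴ * A * V i := by
  constructor
  · intro h
    -- Choi matrix
    set A0 : Matrix (Fin d × Fin d) (Fin d × Fin d) ℂ :=
      Matrix.of fun pa qb => (if pa.1 = pa.2 then (1:ℂ) else 0) *
        (if qb.1 = qb.2 then (1:ℂ) else 0) with hA0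
    have hA0psd : A0.PosSemidef := by
      have : A0 = (Matrix.of fun (_ : Unit) (pa : Fin d × Fin d) =>
          (if pa.1 = pa.2 then (1:ℂ) else 0))ᴴ *
          (Matrix.of fun (_ : Unit) (pa : Fin d × Fin d) =>
          (if pa.1 = pa.2 then (1:ℂ) else 0)) := by
        ext pa qb
        simp [Matrix.mul_apply, hA0, apply_ite (starRingEnd ℂ)]
      rw [this]
      exact Matrix.posSemidef_conjTranspose_mul_self _
    have hCpsd : (blockApply Φ d A0).PosSemidef := h d A0 hA0psd
    obtain ⟨B, hB⟩ : ∃ B : Matrix (Fin d × Fin t) (Fin d × Fin t) ℂ,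
        blockApply Φ d A0 = Bᴴ * B := by
      open scoped MatrixOrder Matrix.Norms.L2Operator in
      exact CStarAlgebra.nonneg_iff_eq_star_mul_self.mp hCpsd.nonneg
    refine ⟨d * t, fun k => Matrix.of fun p i => B (finProdFinEquiv.symm k) (p, i), ?_⟩
    intro A
    -- key: entries of the Choi matrix
    have hC : ∀ (p q : Fin d) (i j : Fin t),
        Φ (Matrix.single p q 1) i j = blockApply Φ d A0 (p, i) (q, j) := by
      intro p q i j
      have : (Matrix.of fun a b => A0 ((p, a)) ((q, b))) =
          Matrix.single p q (1:ℂ) := by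
        ext a b
        by_cases h1 : p = a <;> by_cases h2 : q = b <;>
          simp [hA0, Matrix.single, h1, h2]
      simp [blockApply, this]
    -- decompose A
    have hAdec : Φ A = ∑ p : Fin d, ∑ q : Fin d, A p q • Φ (Matrix.single p q 1) := by
      conv_lhs => rw [Matrix.matrix_eq_sum_single A]
      rw [map_sum]
      refine Finset.sum_congr rfl fun p _ => ?_
      rw [map_sum]
      refine Finset.sum_congr rfl fun q _ => ?_
      have : Matrix.single p q (A p q) = A p q • Matrix.single p q (1:ℂ) := by
        ext a b
        simp [Matrix.single, smul_ite]
      rw [this, LinearMap.map_smul]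
    ext i j
    rw [hAdec]
    have hsum : ∀ (p q : Fin d) (i j : Fin t),
        blockApply Φ d A0 (p, i) (q, j)
          = ∑ k : Fin (d * t), (starRingEnd ℂ) (B (finProdFinEquiv.symm k) (p, i)) *
              B (finProdFinEquiv.symm k) (q, j) := by
      intro p q i j
      rw [hB, Matrix.mul_apply,
        ← Equiv.sum_comp (finProdFinEquiv.symm : Fin (d*t) ≃ Fin d × Fin t)]
      simp [Matrix.conjTranspose_apply]
    simp only [Finset.sum_apply, Matrix.sum_apply, Matrix.smul_apply, Matrix.mul_apply,
      Matrix.conjTranspose_apply, Matrix.of_apply, smul_eq_mul]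
    calc ∑ p : Fin d, ∑ q : Fin d, A p q * Φ (Matrix.single p q 1) i j
        = ∑ p : Fin d, ∑ q : Fin d, ∑ k : Fin (d * t),
            (starRingEnd ℂ) (B (finProdFinEquiv.symm k) (p, i)) * A p q *
              B (finProdFinEquiv.symm k) (q, j) := by
          refine Finset.sum_congr rfl fun p _ => Finset.sum_congr rfl fun q _ => ?_
          rw [hC p q i j, hsum, Finset.mul_sum]
          exact Finset.sum_congr rfl fun k _ => by ring
      _ = ∑ p : Fin d, ∑ k : Fin (d * t), ∑ q : Fin d,
            (starRingEnd ℂ) (B (finProdFinEquiv.symm k) (p, i)) * A p q *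
              B (finProdFinEquiv.symm k) (q, j) := by
          exact Finset.sum_congr rfl fun p _ => Finset.sum_comm
      _ = ∑ k : Fin (d * t), ∑ p : Fin d, ∑ q : Fin d,
            (starRingEnd ℂ) (B (finProdFinEquiv.symm k) (p, i)) * A p q *
              B (finProdFinEquiv.symm k) (q, j) := Finset.sum_comm
      _ = _ := by
          refine Finset.sum_congr rfl fun k _ => ?_
          rw [Finset.sum_comm]
          refine Finset.sum_congr rfl fun q _ => ?_
          rw [Finset.sum_mul]
          refine Finset.sum_congr rfl fun p _ => ?_
          rw [starRingEnd_apply]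
  · rintro ⟨r, V, hV⟩ s A hA
    have : blockApply Φ s A = ∑ k : Fin r,
        (Matrix.of fun (pa : Fin s × Fin d) (qi : Fin s × Fin t) =>
          if pa.1 = qi.1 then V k pa.2 qi.2 else 0)ᴴ * A *
        (Matrix.of fun (pa : Fin s × Fin d) (qi : Fin s × Fin t) =>
          if pa.1 = qi.1 then V k pa.2 qi.2 else 0) := by
      ext ⟨p, i⟩ ⟨q, j⟩
      simp only [blockApply, Matrix.of_apply, hV, Matrix.sum_apply, Matrix.mul_apply,
        Matrix.conjTranspose_apply, Fintype.sum_prod_type, apply_ite star, star_zero,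
        ite_mul, mul_ite, zero_mul, mul_zero]
      refine Finset.sum_congr rfl fun k _ => ?_
      rw [Finset.sum_comm]
      refine Finset.sum_congr rfl fun b _ => ?_
      rw [Finset.sum_ite_eq' Finset.univ q]
      simp only [Finset.mem_univ, if_true]
      congr 1
      rw [Finset.sum_comm]
      refine Finset.sum_congr rfl fun a _ => ?_
      rw [Finset.sum_ite_eq' Finset.univ p]
      simp
    rw [this]
    exact psd_sum _ _ fun k _ => hA.conjTranspose_mul_mul_same _
end
end

section
/- (Choi-type criterion for complete positivity into an operator system) Let C be an abstract operator system on a finite-dimensional real vector space X, let d ≥ 1, and let Ψ: Her_d → X be an ℝ-linear map. Let m ∈ Her_d ⊗ Her_d denote the element corresponding, under the identification Her_d ⊗ Her_d ≅ Her_{d²}, to the positive semidefinite matrix Σ_{i,j=1}^d E_{ij} ⊗ E_{ij} (the unnormalized maximally entangled state, where E_{ij} is the matrix unit and ⊗ is the Kronecker product). Then (Ψ ⊗ id_{Her_s})(Psd_{ds}) ⊆ C(s) holds for all s ≥ 1 if and only if (Ψ ⊗ id_{Her_d})(m) ∈ C(d). -/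
open Matrix
open scoped TensorProduct Kronecker ComplexOrder

noncomputable section

/-- `Her_k`: the real vector space of Hermitian complex matrices indexed by `k`. -/
abbrev HM (k : Type*) [Fintype k] [DecidableEq k] : Type _ := selfAdjoint (Matrix k k ℂ)

section Infrastructure

variable {I J : Type*} [Fintype I] [DecidableEq I] [Fintype J] [DecidableEq J]

/-- The compression map `B ↦ M^* B M : Her_I → Her_J` (ℝ-linear). -/
def compr (M : Matrix I J ℂ) : HM I →ₗ[ℝ] HM J where
  toFun B := ⟨Mᴴ * B.1 * M, Matrix.isHermitian_conjTranspose_mul_mul M B.2⟩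
  map_add' A B := Subtype.ext (by simp [Matrix.mul_add, Matrix.add_mul])
  map_smul' r A := Subtype.ext (by simp [Matrix.mul_smul, Matrix.smul_mul])

/-- The Kronecker product of Hermitian matrices. -/
def kronHerm (A : HM I) (B : HM J) : HM (I × J) :=
  ⟨A.1 ⊗ₖ B.1, by
    have hA : (A.1)ᴴ = A.1 := A.2
    have hB : (B.1)ᴴ = B.1 := B.2
    show star _ = _
    rw [Matrix.star_eq_conjTranspose]
    ext ⟨i1, i2⟩ ⟨j1, j2⟩
    simp only [Matrix.conjTranspose_apply, Matrix.kroneckerMap_apply, star_mul']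
    rw [← Matrix.conjTranspose_apply, ← Matrix.conjTranspose_apply, hA, hB, mul_comm]⟩

def kronBil : HM I →ₗ[ℝ] HM J →ₗ[ℝ] HM (I × J) :=
  LinearMap.mk₂ ℝ kronHerm
    (fun A A' B => Subtype.ext (by simp [kronHerm, Matrix.add_kronecker]))
    (fun r A B => Subtype.ext (by simp [kronHerm, Matrix.smul_kronecker]))
    (fun A B B' => Subtype.ext (by simp [kronHerm, Matrix.kronecker_add]))
    (fun r A B => Subtype.ext (by simp [kronHerm, Matrix.kronecker_smul]))

/-- The identification `Her_I ⊗ Her_J ≅ Her_{I×J}` (via the Kronecker product),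
as a linear map. -/
def kron : TensorProduct ℝ (HM I) (HM J) →ₗ[ℝ] HM (I × J) :=
  TensorProduct.lift kronBil

end Infrastructure

section Helpers

set_option maxHeartbeats 1000000
set_option synthInstance.maxHeartbeats 400000

variable {I J K : Type*} [Fintype I] [DecidableEq I] [Fintype J] [DecidableEq J]
  [Fintype K] [DecidableEq K]

/-- The inclusion of Hermitian matrices into all matrices, as an `ℝ`-linear map. -/
def hmVal (I : Type*) [Fintype I] [DecidableEq I] : HM I →ₗ[ℝ] Matrix I I ℂ where
  toFun A := A.1
  map_add' _ _ := rfl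
  map_smul' _ _ := rfl

lemma hmVal_injective : Function.Injective (hmVal I) := fun _ _ h => Subtype.ext h

instance : FiniteDimensional ℝ (HM I) :=
  FiniteDimensional.of_injective (hmVal I) hmVal_injective

lemma hm_sum_val {ι : Type*} (s : Finset ι) (f : ι → HM I) :
    (↑(∑ i ∈ s, f i) : Matrix I I ℂ) = ∑ i ∈ s, ((f i : HM I) : Matrix I I ℂ) :=
  map_sum (hmVal I) f s

lemma real_smul_matrix (r : ℝ) (X : Matrix I J ℂ) : r • X = (r : ℂ) • X := by
  simpa using (algebraMap_smul ℂ r X).symm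

lemma herm_cindep {ι : Type*} [Fintype ι] {v : ι → HM I}
    (hv : LinearIndependent ℝ fun i => (v i).1) :
    LinearIndependent ℂ fun i => (v i).1 := by
  rw [Fintype.linearIndependent_iff]
  intro g hg
  have hR : ∀ r : ι → ℝ, (∑ i, ((r i : ℂ)) • (v i).1) = 0 → ∀ i, r i = 0 := by
    intro r hr
    refine Fintype.linearIndependent_iff.mp hv r ?_
    calc (∑ i, r i • (v i).1) = ∑ i, ((r i : ℂ)) • (v i).1 :=
          Finset.sum_congr rfl fun i _ => real_smul_matrix (r i) _
      _ = 0 := hr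
  have hc : ∀ i, ((v i).1)ᴴ = (v i).1 := fun i => (v i).2
  have hg' : (∑ i, (starRingEnd ℂ (g i)) • (v i).1) = 0 := by
    have h := congrArg Matrix.conjTranspose hg
    simpa [Matrix.conjTranspose_sum, Matrix.conjTranspose_smul, hc] using h
  have hre : ∀ i, (g i).re = 0 := by
    intro i
    have h2 : (∑ i, (((2 * (g i).re : ℝ) : ℂ)) • (v i).1) = 0 := by
      calc (∑ i, (((2 * (g i).re : ℝ) : ℂ)) • (v i).1)
          = ∑ i, (g i + starRingEnd ℂ (g i)) • (v i).1 := by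
            refine Finset.sum_congr rfl fun i _ => ?_
            rw [Complex.add_conj]
        _ = 0 := by simp only [add_smul, Finset.sum_add_distrib, hg, hg', add_zero]
    have := hR _ h2 i
    linarith
  have him : ∀ i, (g i).im = 0 := by
    intro i
    have h3 : (∑ i, (g i - starRingEnd ℂ (g i)) • (v i).1) = 0 := by
      simp only [sub_smul, Finset.sum_sub_distrib, hg, hg', sub_zero]
    have h4 : (∑ i, (((2 * (g i).im : ℝ) : ℂ)) • (v i).1) = 0 := by
      have h5 := congrArg (fun X => (-Complex.I) • X) h3
      simp only [Finset.smul_sum, smul_smul, smul_zero] at h5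
      calc (∑ i, (((2 * (g i).im : ℝ) : ℂ)) • (v i).1)
          = ∑ i, (-Complex.I * (g i - starRingEnd ℂ (g i))) • (v i).1 := by
            refine Finset.sum_congr rfl fun i _ => ?_
            congr 1
            rw [Complex.sub_conj]
            push_cast
            ring_nf
            rw [Complex.I_sq]
            ring
        _ = 0 := h5
    have := hR _ h4 i
    linarith
  intro i
  exact Complex.ext (by simpa using hre i) (by simpa using him i)

lemma kron_cindep {ι κ : Type*} [Fintype ι] [Fintype κ]
    {A : ι → Matrix I I ℂ} {B : κ → Matrix J J ℂ}
    (hA : LinearIndependent ℂ A) (hB : LinearIndependent ℂ B) :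
    LinearIndependent ℂ fun p : ι × κ => A p.1 ⊗ₖ B p.2 := by
  rw [Fintype.linearIndependent_iff]
  intro g hg
  have key : ∀ (p q : I) (j : κ), (∑ i, g (i, j) * A i p q) = 0 := by
    intro p q j
    have hBj : (∑ j', (∑ i, g (i, j') * A i p q) • B j') = 0 := by
      ext a b
      have h0 := Matrix.ext_iff.mpr hg (p, a) (q, b)
      simp only [Matrix.sum_apply, Matrix.smul_apply, Matrix.kroneckerMap_apply,
        smul_eq_mul, Matrix.zero_apply] at h0 ⊢
      calc (∑ j', (∑ i, g (i, j') * A i p q) * B j' a b)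
          = ∑ j', ∑ i, g (i, j') * (A i p q * B j' a b) := by
            simp [Finset.sum_mul, mul_assoc]
        _ = ∑ i, ∑ j', g (i, j') * (A i p q * B j' a b) := Finset.sum_comm
        _ = 0 := by rw [Fintype.sum_prod_type] at h0; simpa using h0
    exact Fintype.linearIndependent_iff.mp hB _ hBj j
  intro p
  obtain ⟨i, j⟩ := p
  have hAj : (∑ i', g (i', j) • A i') = 0 := by
    ext p q
    simp only [Matrix.sum_apply, Matrix.smul_apply, smul_eq_mul, Matrix.zero_apply]
    exact key p q j
  exact Fintype.linearIndependent_iff.mp hA _ hAj i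

lemma kron_tmul_val (A : HM I) (B : HM J) :
    ((kron (A ⊗ₜ[ℝ] B) : HM (I × J)) : Matrix (I × J) (I × J) ℂ) = A.1 ⊗ₖ B.1 := rfl

lemma kron_injective :
    Function.Injective (kron : TensorProduct ℝ (HM I) (HM J) →ₗ[ℝ] HM (I × J)) := by
  rw [← LinearMap.ker_eq_bot, LinearMap.ker_eq_bot']
  intro x hx
  classical
  set bI := Module.finBasis ℝ (HM I) with hbI
  set bJ := Module.finBasis ℝ (HM J) with hbJ
  set b := Module.Basis.tensorProduct bI bJ with hb
  have hindI : LinearIndependent ℂ fun i => (bI i).1 := by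
    refine herm_cindep ?_
    exact bI.linearIndependent.map' (hmVal I) (LinearMap.ker_eq_bot.mpr hmVal_injective)
  have hindJ : LinearIndependent ℂ fun j => (bJ j).1 := by
    refine herm_cindep ?_
    exact bJ.linearIndependent.map' (hmVal J) (LinearMap.ker_eq_bot.mpr hmVal_injective)
  have hind := kron_cindep hindI hindJ
  have h2 : x = ∑ p, b.repr x p • ((bI p.1) ⊗ₜ[ℝ] (bJ p.2)) := by
    conv_lhs => rw [← b.sum_repr x]
    refine Finset.sum_congr rfl fun p _ => ?_
    rw [hb, Module.Basis.tensorProduct_apply']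
  have hx0 : (∑ p, ((b.repr x p : ℝ) : ℂ) • ((bI p.1).1 ⊗ₖ (bJ p.2).1)) = 0 := by
    have h1 : ((kron x : HM (I × J)) : Matrix (I × J) (I × J) ℂ) = 0 := by
      rw [hx]; rfl
    calc (∑ p, ((b.repr x p : ℝ) : ℂ) • ((bI p.1).1 ⊗ₖ (bJ p.2).1))
        = ((kron x : HM (I × J)) : Matrix (I × J) (I × J) ℂ) := by
          conv_rhs => rw [h2]
          rw [map_sum, hm_sum_val]
          refine (Finset.sum_congr rfl fun p _ => ?_).symm
          rw [LinearMap.map_smul]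
          have hcoe : (↑(b.repr x p • kron ((bI p.1) ⊗ₜ[ℝ] (bJ p.2)))
                : Matrix (I × J) (I × J) ℂ)
              = b.repr x p • (↑(kron ((bI p.1) ⊗ₜ[ℝ] (bJ p.2)))
                : Matrix (I × J) (I × J) ℂ) := rfl
          rw [hcoe, kron_tmul_val, real_smul_matrix]
      _ = 0 := h1
  have hcoef : ∀ p, b.repr x p = 0 := by
    intro p
    have := Fintype.linearIndependent_iff.mp hind
      (fun p => ((b.repr x p : ℝ) : ℂ)) hx0 p
    exact_mod_cast this
  rw [h2]
  simp [hcoef]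

lemma kron_conjT (A : Matrix I I ℂ) (B : Matrix J K ℂ) : (A ⊗ₖ B)ᴴ = Aᴴ ⊗ₖ Bᴴ := by
  ext ⟨a, b⟩ ⟨c, e⟩
  simp [Matrix.conjTranspose_apply, Matrix.kroneckerMap_apply, star_mul', mul_comm]

lemma kron_map_compr (M : Matrix J K ℂ) (y : TensorProduct ℝ (HM I) (HM J)) :
    ((kron (TensorProduct.map LinearMap.id (compr M) y) : HM (I × K))
        : Matrix (I × K) (I × K) ℂ)
      = ((1 : Matrix I I ℂ) ⊗ₖ M)ᴴ * ((kron y : HM (I × J)) : Matrix (I × J) (I × J) ℂ)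
        * ((1 : Matrix I I ℂ) ⊗ₖ M) := by
  induction y using TensorProduct.induction_on with
  | zero => simp
  | tmul A B =>
      rw [TensorProduct.map_tmul]
      show (A.1 ⊗ₖ (Mᴴ * B.1 * M)) = _
      rw [kron_tmul_val, kron_conjT, ← Matrix.mul_kronecker_mul, ← Matrix.mul_kronecker_mul,
        Matrix.conjTranspose_one]
      simp
  | add y z hy hz =>
      have h1 : (↑(kron ((TensorProduct.map LinearMap.id (compr M)) (y + z)))
            : Matrix (I × K) (I × K) ℂ)
          = ↑(kron ((TensorProduct.map LinearMap.id (compr M)) y))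
            + ↑(kron ((TensorProduct.map LinearMap.id (compr M)) z)) := by
        rw [map_add, map_add]; rfl
      have h2 : (↑(kron (y + z)) : Matrix (I × J) (I × J) ℂ)
          = ↑(kron y) + ↑(kron z) := by rw [map_add]; rfl
      rw [h1, h2, hy, hz, Matrix.mul_add, Matrix.add_mul]

end Helpers

/-- A proper cone: a convex cone that is closed (equivalently, by the bipolar theorem in
finite dimensions, equal to its double dual cone), sharp, and full. -/
def IsProperCone {M : Type*} [AddCommGroup M] [Module ℝ M] (C : Set M) : Prop :=
  (∀ x ∈ C, ∀ y ∈ C, x + y ∈ C) ∧ (∀ r : ℝ, 0 ≤ r → ∀ x ∈ C, r • x ∈ C) ∧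
  (∀ x, (∀ f : Module.Dual ℝ M, (∀ c ∈ C, 0 ≤ f c) → 0 ≤ f x) → x ∈ C) ∧
  (∀ x ∈ C, -x ∈ C → x = 0) ∧ (∀ x : M, ∃ a ∈ C, ∃ b ∈ C, x = a - b)

/-- An abstract operator system on a real vector space `X`: a proper cone
`cone s ⊆ X ⊗ Her_s` for every level `s`, compatible with all matrix compressions. -/
structure AOS (X : Type*) [AddCommGroup X] [Module ℝ X] where
  cone : ∀ s : ℕ, Set (TensorProduct ℝ X (HM (Fin s)))
  proper : ∀ s, IsProperCone (cone s)
  compat : ∀ (s t : ℕ) (M : Matrix (Fin s) (Fin t) ℂ), ∀ A ∈ cone s,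
    TensorProduct.map LinearMap.id (compr M) A ∈ cone t


/-- The row matrix representing the maximally entangled vector. -/
def wMat (d : ℕ) : Matrix Unit (Fin d × Fin d) ℂ :=
  Matrix.of fun _ z => if z.1 = z.2 then 1 else 0

lemma sum_std_eq (d : ℕ) :
    (∑ i : Fin d, ∑ j : Fin d, single i j (1:ℂ) ⊗ₖ single i j (1:ℂ))
      = (wMat d)ᴴ * wMat d := by
  ext ⟨p, q⟩ ⟨r, t⟩
  simp only [Matrix.sum_apply, Matrix.kroneckerMap_apply, Matrix.mul_apply,
    Matrix.conjTranspose_apply, Matrix.of_apply, Matrix.single, wMat]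
  by_cases hpq : p = q <;> by_cases hrt : r = t <;>
    simp [hpq, hrt, ite_and, Finset.sum_ite_eq, apply_ite (star : ℂ → ℂ)]
  all_goals tauto

lemma w_mul_one_kron {K : Type*} [Fintype K] [DecidableEq K] {d : ℕ} (M : Matrix (Fin d) K ℂ) :
    wMat d * ((1 : Matrix (Fin d) (Fin d) ℂ) ⊗ₖ M)
      = Matrix.of fun (_ : Unit) (z : Fin d × K) => M z.1 z.2 := by
  ext u ⟨j, b⟩
  simp [wMat, Matrix.mul_apply, Fintype.sum_prod_type, Matrix.one_apply, ite_mul,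
    Finset.sum_ite_eq, Finset.sum_ite_eq', Matrix.kroneckerMap_apply]

lemma kron_compr_m_val {K : Type*} [Fintype K] [DecidableEq K] {d : ℕ} {m : TensorProduct ℝ (HM (Fin d)) (HM (Fin d))}
    (hm : (kron m).1 = ∑ i : Fin d, ∑ j : Fin d,
      single i j (1 : ℂ) ⊗ₖ single i j (1 : ℂ))
    (M : Matrix (Fin d) K ℂ) :
    (↑(kron (TensorProduct.map LinearMap.id (compr M) m))
        : Matrix (Fin d × K) (Fin d × K) ℂ)
      = (Matrix.of fun (_ : Unit) (z : Fin d × K) => M z.1 z.2)ᴴ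
        * Matrix.of fun (_ : Unit) (z : Fin d × K) => M z.1 z.2 := by
  rw [kron_map_compr, hm, sum_std_eq, ← Matrix.mul_assoc ((1 ⊗ₖ M)ᴴ) ((wMat d)ᴴ) (wMat d),
    Matrix.mul_assoc (((1 ⊗ₖ M)ᴴ) * (wMat d)ᴴ) (wMat d) (1 ⊗ₖ M),
    ← Matrix.conjTranspose_mul, w_mul_one_kron]

lemma zero_mem_cone {X : Type*} [AddCommGroup X] [Module ℝ X] (C : AOS X) (s : ℕ) :
    0 ∈ C.cone s := by
  obtain ⟨a, ha, b, hb, hab⟩ := (C.proper s).2.2.2.2 0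
  simpa using (C.proper s).2.1 0 le_rfl a ha

open scoped MatrixOrder in
lemma psd_eq_conjT_mul_self {n : Type*} [Fintype n] {A : Matrix n n ℂ} (hA : A.PosSemidef) :
    ∃ B : Matrix n n ℂ, A = Bᴴ * B := by
  classical
  obtain ⟨B, hB⟩ := CStarAlgebra.nonneg_iff_eq_star_mul_self.mp hA.nonneg
  exact ⟨B, hB⟩

/-- Choi-type criterion: for an abstract operator system `C` on `X`, `d ≥ 1`,
and a linear map `Ψ : Her_d → X`, one has `(Ψ ⊗ id_{Her_s})(Psd_{ds}) ⊆ C(s)` for all `s`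
iff `(Ψ ⊗ id_{Her_d})(m) ∈ C(d)`, where `m ∈ Her_d ⊗ Her_d` corresponds to the
(unnormalized) maximally entangled state `Σ_{i,j} E_{ij} ⊗ E_{ij}` under the Kronecker
identification `Her_d ⊗ Her_d ≅ Her_{d²}`. -/
theorem choi_criterion {X : Type*} [AddCommGroup X] [Module ℝ X] [FiniteDimensional ℝ X]
    (C : AOS X) (d : ℕ) (hd : 1 ≤ d) (Ψ : HM (Fin d) →ₗ[ℝ] X)
    (m : TensorProduct ℝ (HM (Fin d)) (HM (Fin d)))
    (hm : (kron m).1 = ∑ i : Fin d, ∑ j : Fin d,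
      single i j (1 : ℂ) ⊗ₖ single i j (1 : ℂ)) :
    (∀ (s : ℕ) (x : TensorProduct ℝ (HM (Fin d)) (HM (Fin s))),
        (kron x).1.PosSemidef → TensorProduct.map Ψ LinearMap.id x ∈ C.cone s) ↔
      TensorProduct.map Ψ LinearMap.id m ∈ C.cone d := by
  constructor
  · intro h
    refine h d m ?_
    rw [hm, sum_std_eq]
    exact Matrix.posSemidef_conjTranspose_mul_self _
  · intro hmem s x hx
    obtain ⟨Bm, hB⟩ := psd_eq_conjT_mul_self hx
    have hterm : ∀ k : Fin d × Fin s,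
        (↑(kron (TensorProduct.map LinearMap.id
            (compr (Matrix.of fun i a => Bm k (i, a))) m))
          : Matrix (Fin d × Fin s) (Fin d × Fin s) ℂ)
        = (Matrix.of fun (_ : Unit) (z : Fin d × Fin s) => Bm k (z.1, z.2))ᴴ
          * Matrix.of fun (_ : Unit) (z : Fin d × Fin s) => Bm k (z.1, z.2) :=
      fun k => kron_compr_m_val hm (Matrix.of fun i a => Bm k (i, a))
    have hxk : x = ∑ k : Fin d × Fin s,
        TensorProduct.map LinearMap.id (compr (Matrix.of fun i a => Bm k (i, a))) m := by
      apply kron_injective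
      apply Subtype.ext
      rw [hB, map_sum, hm_sum_val]
      symm
      calc (∑ k : Fin d × Fin s, (↑(kron (TensorProduct.map LinearMap.id
              (compr (Matrix.of fun i a => Bm k (i, a))) m))
            : Matrix (Fin d × Fin s) (Fin d × Fin s) ℂ))
          = ∑ k : Fin d × Fin s,
              (Matrix.of fun (_ : Unit) (z : Fin d × Fin s) => Bm k (z.1, z.2))ᴴ
              * Matrix.of fun (_ : Unit) (z : Fin d × Fin s) => Bm k (z.1, z.2) :=
            Finset.sum_congr rfl fun k _ => hterm k
        _ = Bmᴴ * Bm := by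
            ext ⟨i, a⟩ ⟨j, b⟩
            simp [Matrix.sum_apply, Matrix.mul_apply, Matrix.conjTranspose_apply]
    rw [hxk, map_sum]
    refine Finset.sum_induction _ (· ∈ C.cone s)
      (fun a b ha hb => (C.proper s).1 a ha b hb) (zero_mem_cone C s) ?_
    intro k _
    have hcomm : TensorProduct.map Ψ LinearMap.id
          (TensorProduct.map LinearMap.id (compr (Matrix.of fun i a => Bm k (i, a))) m)
        = TensorProduct.map LinearMap.id (compr (Matrix.of fun i a => Bm k (i, a)))
          (TensorProduct.map Ψ LinearMap.id m) := by
      have h1 : TensorProduct.map Ψ LinearMap.id ∘ₗ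
            TensorProduct.map LinearMap.id (compr (Matrix.of fun i a => Bm k (i, a)))
          = TensorProduct.map LinearMap.id (compr (Matrix.of fun i a => Bm k (i, a))) ∘ₗ
            TensorProduct.map Ψ LinearMap.id := by
        rw [← TensorProduct.map_comp, ← TensorProduct.map_comp]
        simp
      exact LinearMap.congr_fun h1 m
    rw [hcomm]
    exact C.compat d s (Matrix.of fun i a => Bm k (i, a)) _ hmem
end
end

section
/- (Separation/realization theorem for operator systems) Let C be an abstract operator system on a finite-dimensional real vector space X, let s ≥ 1, and let a ∈ X ⊗ Her_s with a ∉ C(s). Then there exist n ≥ 1 and a linear map Ψ: X → Her_n such that (Ψ ⊗ id_{Her_t})(C(t)) ⊆ Psd_{nt} for all t ≥ 1, while (Ψ ⊗ id_{Her_s})(a) ∉ Psd_{ns}. Consequently, every abstract operator system is an intersection of free spectrahedra, i.e., of systems of the form t ↦ (Ψ ⊗ id_{Her_t})^{-1}(Psd_{nt}). -/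
open Matrix
open scoped TensorProduct Kronecker ComplexOrder

noncomputable section

namespace SepAux
variable {s : ℕ}

def Gm (j k : Fin s) : HM (Fin s) :=
  ⟨Matrix.single j k 1 + Matrix.single k j 1, by
    show star _ = _
    rw [Matrix.star_eq_conjTranspose]
    ext u v
    simp [Matrix.single, Matrix.conjTranspose_apply, and_comm]
    ring⟩

def Hm (j k : Fin s) : HM (Fin s) :=
  ⟨Complex.I • (Matrix.single j k 1 - Matrix.single k j 1), by
    show star _ = _
    rw [Matrix.star_eq_conjTranspose]
    ext u v
    simp [Matrix.single, Matrix.conjTranspose_apply, and_comm, Complex.ext_iff]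
    ⟩

lemma Gm_symm (j k : Fin s) : Gm k j = Gm j k := Subtype.ext (by simp [Gm, add_comm])
lemma Hm_symm (j k : Fin s) : Hm k j = - Hm j k := Subtype.ext (by simp [Hm, smul_sub])

lemma Gm_val (j k u v : Fin s) :
    (Gm j k).1 u v = (if j = u ∧ k = v then 1 else 0) + (if k = u ∧ j = v then 1 else 0) := by
  simp [Gm, Matrix.single]

lemma Hm_val (j k u v : Fin s) :
    (Hm j k).1 u v = Complex.I * ((if j = u ∧ k = v then 1 else 0) - (if k = u ∧ j = v then 1 else 0)) := by
  simp [Hm, Matrix.single]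

variable {X : Type*} [AddCommGroup X] [Module ℝ X]

def PsiEnt (φ : Module.Dual ℝ (TensorProduct ℝ X (HM (Fin s)))) (x : X) :
    Matrix (Fin s) (Fin s) ℂ :=
  fun j k => (((φ (x ⊗ₜ Gm j k) : ℝ) : ℂ) - Complex.I * ((φ (x ⊗ₜ Hm j k) : ℝ) : ℂ)) / 2

lemma PsiEnt_herm (φ : Module.Dual ℝ (TensorProduct ℝ X (HM (Fin s)))) (x : X) :
    (PsiEnt φ x).IsHermitian := by
  ext j k
  simp only [Matrix.conjTranspose_apply, PsiEnt]
  rw [Gm_symm, Hm_symm, TensorProduct.tmul_neg, map_neg]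
  push_cast
  simp [map_div₀, map_sub, Complex.conj_ofReal, Complex.conj_I]
  ring

end SepAux

namespace SepAux2
open SepAux
variable {s : ℕ} {X : Type*} [AddCommGroup X] [Module ℝ X]

def Psi (φ : Module.Dual ℝ (TensorProduct ℝ X (HM (Fin s)))) : X →ₗ[ℝ] HM (Fin s) where
  toFun x := ⟨PsiEnt φ x, PsiEnt_herm φ x⟩
  map_add' x y := Subtype.ext (by
    ext j k
    simp [PsiEnt, TensorProduct.add_tmul]
    push_cast
    ring)
  map_smul' r x := Subtype.ext (by
    ext j k
    have h1 : ∀ B : HM (Fin s), (r • x) ⊗ₜ[ℝ] B = r • (x ⊗ₜ[ℝ] B) := fun B => by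
      rw [TensorProduct.smul_tmul, TensorProduct.tmul_smul]
    simp [PsiEnt, h1, Matrix.smul_apply]
    push_cast
    ring)

lemma hm_decomp (B : HM (Fin s)) :
    B = ∑ p : Fin s × Fin s, (((B.1 p.1 p.2).re / 2) • Gm p.1 p.2 + ((B.1 p.1 p.2).im / 2) • Hm p.1 p.2) := by
  apply Subtype.ext
  push_cast [AddSubmonoid.coe_finset_sum]
  ext u v
  rw [Matrix.sum_apply]
  have hB : (B.1 v u) = (starRingEnd ℂ) (B.1 u v) := by
    conv_lhs => rw [← B.2]
    simp [Matrix.star_eq_conjTranspose, Matrix.conjTranspose_apply]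
  simp only [Matrix.add_apply, Matrix.smul_apply, Gm_val, Hm_val, Fintype.sum_prod_type,
    smul_eq_mul, Complex.real_smul, mul_sub, mul_add, mul_ite, mul_one, mul_zero, ite_and,
    Finset.sum_add_distrib, Finset.sum_sub_distrib, Finset.sum_ite_eq, Finset.sum_ite_eq',
    Finset.mem_univ, if_true, Finset.sum_ite_irrel, Finset.sum_const_zero]
  rw [hB]
  simp [Complex.ext_iff]
  ring

lemma pairing (φ : Module.Dual ℝ (TensorProduct ℝ X (HM (Fin s)))) (x : X) (B : HM (Fin s)) :
    ((φ (x ⊗ₜ B) : ℝ) : ℂ) = ∑ p : Fin s × Fin s, PsiEnt φ x p.1 p.2 * B.1 p.1 p.2 := by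
  have hb : ∀ p : Fin s × Fin s, B.1 p.2 p.1 = (starRingEnd ℂ) (B.1 p.1 p.2) := by
    intro p
    conv_lhs => rw [← B.2]
    simp [Matrix.star_eq_conjTranspose, Matrix.conjTranspose_apply]
  have hL : ((φ (x ⊗ₜ B) : ℝ) : ℂ)
      = ∑ p : Fin s × Fin s, ((((B.1 p.1 p.2).re/2 : ℝ) : ℂ) * ((φ (x ⊗ₜ Gm p.1 p.2) : ℝ) : ℂ)
          + (((B.1 p.1 p.2).im/2 : ℝ) : ℂ) * ((φ (x ⊗ₜ Hm p.1 p.2) : ℝ) : ℂ)) := by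
    conv_lhs => rw [hm_decomp B]
    rw [TensorProduct.tmul_sum, map_sum]
    push_cast
    apply Finset.sum_congr rfl
    intro p _
    rw [TensorProduct.tmul_add, map_add, TensorProduct.tmul_smul, TensorProduct.tmul_smul,
      _root_.map_smul, _root_.map_smul]
    simp only [smul_eq_mul]
    push_cast
    ring
  rw [hL]
  have hswap : ∑ p : Fin s × Fin s, PsiEnt φ x p.1 p.2 * B.1 p.1 p.2
      = ∑ p : Fin s × Fin s, PsiEnt φ x p.2 p.1 * B.1 p.2 p.1 :=
    Fintype.sum_equiv (Equiv.prodComm _ _) _ _ (fun p => rfl)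
  apply mul_left_cancel₀ (two_ne_zero (α := ℂ))
  rw [two_mul, two_mul]
  nth_rewrite 2 [hswap]
  rw [← Finset.sum_add_distrib, ← Finset.sum_add_distrib]
  apply Finset.sum_congr rfl
  intro p _
  rw [hb p]
  simp only [PsiEnt]
  rw [Gm_symm p.1 p.2, Hm_symm p.1 p.2, TensorProduct.tmul_neg, map_neg]
  push_cast
  set g := ((φ (x ⊗ₜ Gm p.1 p.2) : ℝ) : ℂ)
  set h := ((φ (x ⊗ₜ Hm p.1 p.2) : ℝ) : ℂ)
  set b := B.1 p.1 p.2
  have hbre : b + (starRingEnd ℂ) b = 2 * ((b.re : ℝ) : ℂ) := by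
    simp [Complex.ext_iff]; ring
  have hbim : b - (starRingEnd ℂ) b = 2 * Complex.I * ((b.im : ℝ) : ℂ) := by
    simp [Complex.ext_iff]; ring
  have hI : Complex.I * Complex.I = -1 := Complex.I_mul_I
  linear_combination (-g/2) * hbre + (Complex.I*h/2) * hbim + ((b.im:ℝ):ℂ) * h * hI


set_option synthInstance.maxHeartbeats 1000000 in
lemma master (φ : Module.Dual ℝ (TensorProduct ℝ X (HM (Fin s)))) {t : ℕ}
    (M : Matrix (Fin t) (Fin s) ℂ) (w : TensorProduct ℝ X (HM (Fin t))) :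
    star (fun p : Fin s × Fin t => M p.2 p.1) ⬝ᵥ
      ((kron (TensorProduct.map (Psi φ) LinearMap.id w)).1 *ᵥ (fun p : Fin s × Fin t => M p.2 p.1))
    = ((φ (TensorProduct.map LinearMap.id (compr M) w) : ℝ) : ℂ) := by
  induction w using TensorProduct.induction_on with
  | zero =>
    rw [map_zero, map_zero, map_zero, map_zero]
    show star _ ⬝ᵥ ((0 : Matrix _ _ ℂ) *ᵥ _) = ((0:ℝ):ℂ)
    simp
  | add w₁ w₂ h1 h2 =>
    rw [map_add, map_add, map_add]
    have hval : (kron (TensorProduct.map (Psi φ) LinearMap.id w₁) + kron (TensorProduct.map (Psi φ) LinearMap.id w₂)).1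
        = (kron (TensorProduct.map (Psi φ) LinearMap.id w₁)).1 + (kron (TensorProduct.map (Psi φ) LinearMap.id w₂)).1 := rfl
    rw [hval, Matrix.add_mulVec, dotProduct_add, h1, h2, map_add φ]
    push_cast
    ring
  | tmul x B =>
    rw [TensorProduct.map_tmul, TensorProduct.map_tmul]
    have hk : kron ((Psi φ) x ⊗ₜ[ℝ] ((LinearMap.id : HM (Fin t) →ₗ[ℝ] HM (Fin t)) B)) = kronHerm ((Psi φ) x) B := by
      simp [kron, kronBil]
    rw [hk]
    rw [LinearMap.id_coe, id_eq, pairing]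
    show star _ ⬝ᵥ ((((Psi φ) x).1 ⊗ₖ B.1) *ᵥ _) = ∑ p : Fin s × Fin s, PsiEnt φ x p.1 p.2 * (Mᴴ * B.1 * M) p.1 p.2
    simp only [dotProduct, Matrix.mulVec, Matrix.kroneckerMap_apply, Pi.star_apply,
      Matrix.mul_apply, Matrix.conjTranspose_apply, Fintype.sum_prod_type, Finset.mul_sum,
      Finset.sum_mul]
    refine Finset.sum_congr rfl fun j _ => ?_
    conv_lhs => rw [Finset.sum_comm]
    refine Finset.sum_congr rfl fun k _ => ?_
    conv_rhs => rw [Finset.sum_comm]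
    refine Finset.sum_congr rfl fun p _ => ?_
    refine Finset.sum_congr rfl fun q _ => ?_
    have hpsi : (((Psi φ) x) : Matrix (Fin s) (Fin s) ℂ) j k = PsiEnt φ x j k := rfl
    rw [hpsi]
    ring

lemma compr_one {u : ℕ} :
    compr (1 : Matrix (Fin u) (Fin u) ℂ) = (LinearMap.id : HM (Fin u) →ₗ[ℝ] HM (Fin u)) := by
  apply LinearMap.ext
  intro B
  apply Subtype.ext
  simp [compr]

lemma sep_main {X : Type*} [AddCommGroup X] [Module ℝ X] (C : AOS X) (s : ℕ)
    (a : TensorProduct ℝ X (HM (Fin s))) (ha : a ∉ C.cone s) :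
    ∃ n : ℕ, 1 ≤ n ∧ ∃ Ψ : X →ₗ[ℝ] HM (Fin n),
      (∀ t : ℕ, ∀ A ∈ C.cone t, (kron (TensorProduct.map Ψ LinearMap.id A)).1.PosSemidef) ∧
      ¬ (kron (TensorProduct.map Ψ LinearMap.id a)).1.PosSemidef := by
  rcases Nat.eq_zero_or_pos s with hs | hs
  · subst hs
    exfalso
    obtain ⟨b, hb, -⟩ := (C.proper 0).2.2.2.2 0
    exact ha (Subsingleton.elim a b ▸ hb)
  · have hsep : ∃ f : Module.Dual ℝ (TensorProduct ℝ X (HM (Fin s))),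
        (∀ c ∈ C.cone s, 0 ≤ f c) ∧ f a < 0 := by
      by_contra h
      push_neg at h
      exact ha ((C.proper s).2.2.1 a (fun f hf => h f hf))
    obtain ⟨φ, hφpos, hφa⟩ := hsep
    refine ⟨s, hs, Psi φ, ?_, ?_⟩
    · intro t A hA
      refine Matrix.PosSemidef.of_dotProduct_mulVec_nonneg (kron (TensorProduct.map (Psi φ) LinearMap.id A)).2 fun v => ?_
      have hv : v = fun p : Fin s × Fin t => (fun (p : Fin t) (j : Fin s) => v (j, p)) p.2 p.1 := rfl
      rw [hv, master φ (fun (p : Fin t) (j : Fin s) => v (j, p)) A]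
      have hmem := C.compat t s (fun (p : Fin t) (j : Fin s) => v (j, p)) A hA
      exact Complex.zero_le_real.mpr (hφpos _ hmem)
    · intro hpsd
      have h2 := hpsd.dotProduct_mulVec_nonneg (fun p : Fin s × Fin s => (1 : Matrix (Fin s) (Fin s) ℂ) p.2 p.1)
      rw [master φ (1 : Matrix (Fin s) (Fin s) ℂ) a, compr_one, TensorProduct.map_id] at h2
      simp only [LinearMap.id_coe, id_eq] at h2
      exact absurd (Complex.zero_le_real.mp h2) (not_le.mpr hφa)

end SepAux2

/-- separation/realization theorem: if `a ∉ C(s)`, there are `n ≥ 1` and a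
linear map `Ψ : X → Her_n` which is completely positive into the psd system but with
`(Ψ ⊗ id_{Her_s})(a)` not positive semidefinite.  Consequently every abstract operator
system is the intersection of the free spectrahedra containing it. -/
theorem separation_realization {X : Type*} [AddCommGroup X] [Module ℝ X]
    [FiniteDimensional ℝ X] (C : AOS X) (s : ℕ)
    (a : TensorProduct ℝ X (HM (Fin s))) (ha : a ∉ C.cone s) :
    (∃ (n : ℕ), 1 ≤ n ∧ ∃ Ψ : X →ₗ[ℝ] HM (Fin n),
      (∀ t : ℕ, ∀ A ∈ C.cone t,
        (kron (TensorProduct.map Ψ LinearMap.id A)).1.PosSemidef) ∧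
      ¬ (kron (TensorProduct.map Ψ LinearMap.id a)).1.PosSemidef) ∧
    (∀ t : ℕ, C.cone t =
      {A : TensorProduct ℝ X (HM (Fin t)) |
        ∀ (n : ℕ) (Ψ : X →ₗ[ℝ] HM (Fin n)),
          (∀ u : ℕ, ∀ B ∈ C.cone u,
            (kron (TensorProduct.map Ψ LinearMap.id B)).1.PosSemidef) →
          (kron (TensorProduct.map Ψ LinearMap.id A)).1.PosSemidef}) := by
  constructor
  · exact SepAux2.sep_main C s a ha
  · intro t
    ext A
    simp only [Set.mem_setOf_eq]
    constructor
    · intro hA n Ψ hΨ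
      exact hΨ t A hA
    · intro hA
      by_contra hnot
      obtain ⟨n, hn, Ψ, hCP, hbad⟩ := SepAux2.sep_main C t A hnot
      exact hbad (hA n Ψ hCP)
end
end
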